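/- arXiv:1611.04889 — 3 statements merged into one kernel-verified Lean document; each statement's English description precedes it below -/
import Mathlib

section
/- Let R be a commutative ring with ℚ ⊆ R, let N ≥ 1, and let M be an N × N matrix over R. In the Grassmann algebra on the 2N generators χ̄₁,χ₁,…,χ̄_N,χ_N, one has det M = ∫ dχ̄_N dχ_N ⋯ dχ̄₁ dχ₁ exp(-Σ_{i,j=1}^N χ̄_i M_{ij} χ_j), i.e. the appropriately signed coefficient of the top monomial in exp(-Σ_{i,j} χ̄_i M_{ij} χ_j) equals det M. -/
open Matrix

/-!
STATEMENT 1: For a commutative ring `R` containing `ℚ`, `N ≥ 1` and an `N × N` matrix `M`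
over `R`, one has `det M = ∫ dχ̄_N dχ_N ⋯ dχ̄₁ dχ₁ exp(-∑ᵢⱼ χ̄ᵢ Mᵢⱼ χⱼ)`.

The Grassmann algebra on the `2N` generators `χ̄₁, χ₁, …, χ̄_N, χ_N` is realized as the
exterior algebra of `Fin (2N) → R`, with `χ_i` the standard basis vector of index
`2(i-1)` and `χ̄_i` the one of index `2(i-1)+1`.  The Berezin integral
`∫ dχ̄_N dχ_N ⋯ dχ̄₁ dχ₁` is the linear form sending the monomial
`χ₁ χ̄₁ χ₂ χ̄₂ ⋯ χ_N χ̄_N` to `1` (and all lower monomials to `0`), i.e. the coefficient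
extraction for the top monomial taken in the order `χ₁, χ̄₁, χ₂, χ̄₂, …`.
-/

/-- The `i`-th Grassmann generator. -/
noncomputable def gVar (R : Type*) [CommRing R] (m : ℕ) (i : Fin m) :
    ExteriorAlgebra R (Fin m → R) :=
  ExteriorAlgebra.ι R (Pi.single i 1)

/-- The Grassmann (Berezin) integral: the `R`-linear form extracting the coefficient of
the ordered top monomial (generator `0` times generator `1` times … times generator
`m-1`). -/
noncomputable def berezin (R : Type*) [CommRing R] (m : ℕ) :
    ExteriorAlgebra R (Fin m → R) →ₗ[R] R :=
  ExteriorAlgebra.liftAlternating fun i =>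
    if h : i = m then by subst h; exact Matrix.detRowAlternating else 0

/-- Exponential of a Grassmann algebra element (truncated at order `m`, which is exact
for elements with zero constant term). -/
noncomputable def gExp {R : Type*} [CommRing R] [Algebra ℚ R] {m : ℕ}
    (x : ExteriorAlgebra R (Fin m → R)) : ExteriorAlgebra R (Fin m → R) :=
  ∑ p ∈ Finset.range (m + 1), algebraMap ℚ R ((p.factorial : ℚ))⁻¹ • x ^ p

/-- The Grassmann variable `χ_i`, `i : Fin N`: basis vector number `2i`. -/
noncomputable def chi (R : Type*) [CommRing R] (N : ℕ) (i : Fin N) :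
    ExteriorAlgebra R (Fin (2 * N) → R) :=
  gVar R (2 * N) ⟨2 * i.1, by have := i.isLt; omega⟩

/-- The conjugate Grassmann variable `χ̄_i`, `i : Fin N`: basis vector number `2i+1`. -/
noncomputable def chibar (R : Type*) [CommRing R] (N : ℕ) (i : Fin N) :
    ExteriorAlgebra R (Fin (2 * N) → R) :=
  gVar R (2 * N) ⟨2 * i.1 + 1, by have := i.isLt; omega⟩

/-! ### Auxiliary material -/

section GrassmannBasics

open ExteriorAlgebra

variable {R M' N' : Type*} [CommRing R] [AddCommGroup M'] [Module R M']
  [AddCommGroup N'] [Module R N']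

lemma Grassmann.gswap (x y : M') : ι R x * ι R y = -(ι R y * ι R x) :=
  eq_neg_of_add_eq_zero_right (ι_add_mul_swap y x)

lemma Grassmann.commute_single_pair (x a b : M') : Commute (ι R x) (ι R a * ι R b) := by
  unfold Commute SemiconjBy
  calc ι R x * (ι R a * ι R b) = -(ι R a * ι R x) * ι R b := by
        rw [← mul_assoc, Grassmann.gswap x a]
    _ = -(ι R a * (ι R x * ι R b)) := by noncomm_ring
    _ = -(ι R a * -(ι R b * ι R x)) := by rw [Grassmann.gswap x b]
    _ = ι R a * ι R b * ι R x := by noncomm_ring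

lemma Grassmann.commute_pair_pair (a b c d : M') :
    Commute (ι R a * ι R b) (ι R c * ι R d) :=
  (Grassmann.commute_single_pair c a b).symm.mul_right
    (Grassmann.commute_single_pair d a b).symm

lemma Grassmann.pair_repeat_zero (a b c : M') : (ι R a * ι R b) * (ι R c * ι R b) = 0 := by
  calc (ι R a * ι R b) * (ι R c * ι R b)
      = ι R a * (ι R b * ι R c) * ι R b := by noncomm_ring
    _ = ι R a * -(ι R c * ι R b) * ι R b := by rw [Grassmann.gswap b c]
    _ = -(ι R a * ι R c * (ι R b * ι R b)) := by noncomm_ring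
    _ = 0 := by rw [ι_sq_zero, mul_zero, neg_zero]

end GrassmannBasics

section L1

variable {A : Type*} [Ring A]

lemma Grassmann.xpow_eq_zero {x : A} (h0 : x * x = 0) {k : ℕ} (hk : 2 ≤ k) : x ^ k = 0 := by
  have : x ^ k = x * x * x ^ (k - 2) := by
    rw [← pow_two, ← pow_add]; congr 1; omega
  rw [this, h0, zero_mul]

lemma Grassmann.sum_pow_eq_zero_of_lt {n : ℕ} (x : Fin n → A)
    (hc : ∀ i j, Commute (x i) (x j)) (h0 : ∀ i, x i * x i = 0) :
    ∀ p, n < p → (∑ i, x i) ^ p = 0 := by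
  induction n with
  | zero =>
    intro p hp
    simp only [Finset.univ_eq_empty, Finset.sum_empty]
    exact zero_pow (by omega)
  | succ n ih =>
    intro p hp
    rw [Fin.sum_univ_succ]
    have hcT : Commute (x 0) (∑ i : Fin n, x i.succ) :=
      Commute.sum_right _ _ _ fun i _ => hc 0 i.succ
    rw [hcT.add_pow]
    apply Finset.sum_eq_zero
    intro k hk
    rcases Nat.lt_or_ge k 2 with hk2 | hk2
    · interval_cases k
      · rw [pow_zero, one_mul, Nat.sub_zero,
          ih _ (fun i j => hc i.succ j.succ) (fun i => h0 i.succ) p (by omega)]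
        simp
      · rw [pow_one,
          ih _ (fun i j => hc i.succ j.succ) (fun i => h0 i.succ) (p - 1) (by omega)]
        simp
    · rw [Grassmann.xpow_eq_zero (h0 0) hk2]; simp

lemma Grassmann.sum_pow_card {n : ℕ} (x : Fin n → A)
    (hc : ∀ i j, Commute (x i) (x j)) (h0 : ∀ i, x i * x i = 0) :
    (∑ i, x i) ^ n = n.factorial • (List.ofFn x).prod := by
  induction n with
  | zero => simp
  | succ n ih =>
    rw [Fin.sum_univ_succ]
    have hcT : Commute (x 0) (∑ i : Fin n, x i.succ) :=
      Commute.sum_right _ _ _ fun i _ => hc 0 i.succ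
    rw [hcT.add_pow]
    rw [Finset.sum_eq_single 1]
    · rw [pow_one, Nat.add_sub_cancel,
        ih _ (fun i j => hc i.succ j.succ) (fun i => h0 i.succ),
        Nat.choose_one_right, mul_smul_comm, ← nsmul_eq_mul', smul_smul,
        List.ofFn_succ, List.prod_cons, Nat.factorial_succ]
    · intro k hk hk1
      rcases Nat.lt_or_ge k 2 with hk2 | hk2
      · interval_cases k
        · rw [pow_zero, one_mul, Nat.sub_zero,
            Grassmann.sum_pow_eq_zero_of_lt (fun i => x i.succ)
              (fun i j => hc i.succ j.succ) (fun i => h0 i.succ) (n + 1) (by omega)]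
          simp
        · exact absurd rfl hk1
      · rw [Grassmann.xpow_eq_zero (h0 0) hk2]; simp
    · intro h; exact absurd (Finset.mem_range.mpr (by omega)) h

end L1

section L2

variable {R A κ : Type*} [CommRing R] [Ring A] [Module R A]
  [SMulCommClass R A A] [IsScalarTower R A A] [Fintype κ]

lemma Grassmann.list_prod_sum_expand : ∀ {n : ℕ} (c : Fin n → κ → R) (z : Fin n → κ → A),
    (List.ofFn fun i => ∑ j : κ, c i j • z i j).prod
      = ∑ g : Fin n → κ, (∏ i, c i (g i)) • (List.ofFn fun i => z i (g i)).prod := by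
  intro n
  induction n with
  | zero => intro c z; simp
  | succ n ih =>
    intro c z
    rw [List.ofFn_succ, List.prod_cons, ih (fun i => c i.succ) (fun i => z i.succ),
      Finset.sum_mul_sum]
    rw [Fintype.sum_equiv (Fin.consEquiv (fun _ : Fin (n + 1) => κ)).symm
      (fun g => (∏ i, c i (g i)) • (List.ofFn fun i => z i (g i)).prod)
      (fun p => (c 0 p.1 * ∏ i, c i.succ (p.2 i)) •
        (z 0 p.1 * (List.ofFn fun i => z i.succ (p.2 i)).prod))
      ?_]
    · rw [Fintype.sum_prod_type]
      refine Finset.sum_congr rfl fun j _ => Finset.sum_congr rfl fun g _ => ?_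
      rw [smul_mul_smul_comm]
    · intro g
      simp [Fin.prod_univ_succ, List.ofFn_succ, Fin.tail]

end L2

section PairEval

open ExteriorAlgebra

/-- Interleaving of two families of vectors. -/
def Grassmann.itl {V : Type*} {n : ℕ} (u w : Fin n → V) : Fin (2 * n) → V :=
  fun k => if k.1 % 2 = 0 then u ⟨k.1 / 2, by have := k.2; omega⟩
    else w ⟨k.1 / 2, by have := k.2; omega⟩

variable {R M' N' : Type*} [CommRing R] [AddCommGroup M'] [Module R M']
  [AddCommGroup N'] [Module R N']

lemma Grassmann.pairEval : ∀ {n : ℕ} (f : ∀ i, M' [⋀^Fin i]→ₗ[R] N') (u w : Fin n → M'),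
    ExteriorAlgebra.liftAlternating f ((List.ofFn fun i => ι R (u i) * ι R (w i)).prod)
      = f (2 * n) (Grassmann.itl u w) := by
  intro n
  induction n with
  | zero =>
    intro f u w
    rw [List.ofFn_zero, List.prod_nil, liftAlternating_one]
    exact congrArg _ (Subsingleton.elim _ _)
  | succ n ih =>
    intro f u w
    rw [List.ofFn_succ, List.prod_cons, mul_assoc, liftAlternating_ι_mul,
      liftAlternating_ι_mul, ih]
    show ((f (2 * n + 1 + 1)).curryLeft (u 0) |>.curryLeft (w 0))
        (Grassmann.itl (fun i => u i.succ) (fun i => w i.succ)) = _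
    rw [AlternatingMap.curryLeft_apply_apply, AlternatingMap.curryLeft_apply_apply]
    congr 1
    funext k
    refine Fin.cases ?_ (fun j => ?_) k
    · simp [Grassmann.itl]
    · rw [Matrix.cons_val_succ]
      refine Fin.cases ?_ (fun l => ?_) j
      · rw [Matrix.cons_val_zero]
        simp [Grassmann.itl, Fin.succ]
        congr 1
        apply Fin.ext
        simp [Nat.mod_eq_of_lt (show 1 < 2 * (n + 1) by omega)]
      · rw [Matrix.cons_val_succ]
        have hval : (l.succ.succ : Fin (2 * n + 1 + 1)).1 = l.1 + 1 + 1 := rfl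
        simp only [Grassmann.itl, hval]
        have h2 : (l.1 + 1 + 1) / 2 = l.1 / 2 + 1 := by omega
        have hm : (l.1 + 1 + 1) % 2 = l.1 % 2 := by omega
        rw [hm]
        split
        · congr 1
          exact Fin.ext (show (↑l / 2 + 1 : ℕ) = (↑l + 1 + 1) / 2 by omega)
        · congr 1
          exact Fin.ext (show (↑l / 2 + 1 : ℕ) = (↑l + 1 + 1) / 2 by omega)

end PairEval

section Berezin

variable {R : Type*} [CommRing R]

lemma Grassmann.berezin_pairs {N : ℕ} (u w : Fin N → (Fin (2 * N) → R)) :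
    berezin R (2 * N)
        ((List.ofFn fun i => ExteriorAlgebra.ι R (u i) * ExteriorAlgebra.ι R (w i)).prod)
      = (Matrix.of (Grassmann.itl u w)).det := by
  rw [berezin, Grassmann.pairEval]
  simp only [dif_pos rfl]
  rfl

lemma Grassmann.berezin_eq_zero {m n : ℕ} (h : n ≠ m)
    (x : ExteriorAlgebra R (Fin m → R)) (hx : x ∈ ⋀[R]^n (Fin m → R)) :
    berezin R m x = 0 := by
  rw [← ExteriorAlgebra.ιMulti_span_fixedDegree] at hx
  induction hx using Submodule.span_induction with
  | mem x hx =>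
    obtain ⟨v, rfl⟩ := hx
    rw [berezin, ExteriorAlgebra.liftAlternating_apply_ιMulti, dif_neg h]
    rfl
  | zero => exact map_zero _
  | add x y _ _ hx hy => rw [map_add, hx, hy, add_zero]
  | smul c x _ hx => rw [LinearMap.map_smul, hx, smul_zero]

end Berezin

section Perm2

open Equiv

/-- The permutation of `Fin (2*N)` acting as `σ` on even indices and identity on odds. -/
def Grassmann.sigma2 {N : ℕ} (σ : Equiv.Perm (Fin N)) : Equiv.Perm (Fin (2 * N)) :=
  (finProdFinEquiv.trans (finCongr (mul_comm N 2))).permCongr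
    (Equiv.prodCongrLeft (fun b : Fin 2 => ![σ, Equiv.refl _] b))

lemma Grassmann.sigma2_sign {N : ℕ} (σ : Equiv.Perm (Fin N)) :
    Equiv.Perm.sign (Grassmann.sigma2 σ) = Equiv.Perm.sign σ := by
  rw [Grassmann.sigma2, Equiv.Perm.sign_permCongr, Equiv.Perm.sign_prodCongrLeft,
    Fin.prod_univ_two]
  simp

lemma Grassmann.sigma2_apply_even {N : ℕ} (σ : Equiv.Perm (Fin N)) (i : Fin N) :
    Grassmann.sigma2 σ ⟨2 * i.1, by have := i.2; omega⟩
      = ⟨2 * (σ i).1, by have := (σ i).2; omega⟩ := by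
  have h : (⟨2 * i.1, by have := i.2; omega⟩ : Fin (2 * N))
      = (finProdFinEquiv.trans (finCongr (mul_comm N 2))) (i, 0) := by
    apply Fin.ext
    simp [finProdFinEquiv]
  rw [Grassmann.sigma2, h, Equiv.permCongr_apply, Equiv.symm_apply_apply]
  apply Fin.ext
  simp [finProdFinEquiv, Equiv.prodCongrLeft]

lemma Grassmann.sigma2_apply_odd {N : ℕ} (σ : Equiv.Perm (Fin N)) (i : Fin N) :
    Grassmann.sigma2 σ ⟨2 * i.1 + 1, by have := i.2; omega⟩
      = ⟨2 * i.1 + 1, by have := i.2; omega⟩ := by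
  have h : (⟨2 * i.1 + 1, by have := i.2; omega⟩ : Fin (2 * N))
      = (finProdFinEquiv.trans (finCongr (mul_comm N 2))) (i, 1) := by
    apply Fin.ext
    simp [finProdFinEquiv]
    omega
  rw [Grassmann.sigma2, h, Equiv.permCongr_apply, Equiv.symm_apply_apply]
  apply Fin.ext
  simp [finProdFinEquiv, Equiv.prodCongrLeft]

end Perm2

section MatrixPart

variable {R : Type*} [CommRing R] {N : ℕ}

lemma Grassmann.itl_even {V : Type*} {n : ℕ} (u w : Fin n → V) (i : Fin n) :
    Grassmann.itl u w ⟨2 * i.1, by have := i.2; omega⟩ = u i := by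
  have h : (⟨2 * i.1 / 2, by have := i.2; omega⟩ : Fin n) = i :=
    Fin.ext (show 2 * i.1 / 2 = i.1 by omega)
  simp only [Grassmann.itl, Nat.mul_mod_right]
  rw [if_pos trivial, h]

lemma Grassmann.itl_odd {V : Type*} {n : ℕ} (u w : Fin n → V) (i : Fin n) :
    Grassmann.itl u w ⟨2 * i.1 + 1, by have := i.2; omega⟩ = w i := by
  have hc : (2 * i.1 + 1) % 2 = 1 := by omega
  have h : (⟨(2 * i.1 + 1) / 2, by have := i.2; omega⟩ : Fin n) = i :=
    Fin.ext (show (2 * i.1 + 1) / 2 = i.1 by omega)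
  simp only [Grassmann.itl, hc]
  rw [if_neg one_ne_zero, h]

/-- The rows of the interleaved single-entry vectors attached to `g`. -/
noncomputable def Grassmann.uRow (g : Fin N → Fin N) : Fin N → (Fin (2 * N) → R) :=
  fun i => Pi.single (⟨2 * (g i).1, by have := (g i).2; omega⟩ : Fin (2 * N)) 1

noncomputable def Grassmann.wRow : Fin N → (Fin (2 * N) → R) :=
  fun i => Pi.single (⟨2 * i.1 + 1, by have := i.2; omega⟩ : Fin (2 * N)) 1

lemma Grassmann.Pmat_eq (σ : Equiv.Perm (Fin N)) :
    Matrix.of (Grassmann.itl (Grassmann.uRow (R := R) ⇑σ) Grassmann.wRow)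
      = (Grassmann.sigma2 σ).permMatrix R := by
  ext k j
  rcases Nat.mod_two_eq_zero_or_one k.1 with hk | hk
  · have hk2 : k = ⟨2 * (⟨k.1 / 2, by have := k.2; omega⟩ : Fin N).1, by
        have := k.2; omega⟩ := Fin.ext (by simp; omega)
    rw [hk2]
    rw [Matrix.of_apply, Grassmann.itl_even, Grassmann.uRow,
      Equiv.Perm.permMatrix, PEquiv.toMatrix_apply,
      Equiv.toPEquiv_apply, Grassmann.sigma2_apply_even]
    simp only [Option.mem_def, Option.some.injEq, Pi.single_apply]
    exact if_congr eq_comm rfl rfl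
  · have hk2 : k = ⟨2 * (⟨k.1 / 2, by have := k.2; omega⟩ : Fin N).1 + 1, by
        have := k.2; omega⟩ := Fin.ext (by simp; omega)
    rw [hk2]
    rw [Matrix.of_apply, Grassmann.itl_odd, Grassmann.wRow,
      Equiv.Perm.permMatrix, PEquiv.toMatrix_apply,
      Equiv.toPEquiv_apply, Grassmann.sigma2_apply_odd]
    simp only [Option.mem_def, Option.some.injEq, Pi.single_apply]
    exact if_congr eq_comm rfl rfl

lemma Grassmann.det_perm (σ : Equiv.Perm (Fin N)) :
    (Matrix.of (Grassmann.itl (Grassmann.uRow (R := R) ⇑σ) Grassmann.wRow)).det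
      = ((Equiv.Perm.sign σ : ℤ) : R) := by
  rw [Grassmann.Pmat_eq, Matrix.det_permutation, Grassmann.sigma2_sign]

lemma Grassmann.det_nonInj (g : Fin N → Fin N) (hg : ¬ Function.Injective g) :
    (Matrix.of (Grassmann.itl (Grassmann.uRow (R := R) g) Grassmann.wRow)).det = 0 := by
  obtain ⟨a, b, hab, hne⟩ := Function.not_injective_iff.mp hg
  refine Matrix.det_zero_of_row_eq
    (i := ⟨2 * a.1, by have := a.2; omega⟩) (j := ⟨2 * b.1, by have := b.2; omega⟩)
    (fun h => hne (Fin.ext (by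
      have := congrArg Fin.val h
      simp at this
      omega))) ?_
  show Grassmann.itl _ _ _ = Grassmann.itl _ _ _
  rw [Grassmann.itl_even, Grassmann.itl_even]
  simp [Grassmann.uRow, hab]

end MatrixPart

theorem stmt1 (R : Type*) [CommRing R] [Algebra ℚ R] (N : ℕ) (hN : 1 ≤ N)
    (M : Matrix (Fin N) (Fin N) R) :
    M.det =
      berezin R (2 * N)
        (gExp (-∑ i : Fin N, ∑ j : Fin N, M i j • (chibar R N i * chi R N j))) := by
  classical
  let z : Fin N → Fin N → ExteriorAlgebra R (Fin (2 * N) → R) :=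
    fun i j => chi R N j * chibar R N i
  let y : Fin N → ExteriorAlgebra R (Fin (2 * N) → R) :=
    fun i => ∑ j : Fin N, M i j • z i j
  have hzz : ∀ i j : Fin N, M i j • (chibar R N i * chi R N j) = -(M i j • z i j) := by
    intro i j
    show M i j • (ExteriorAlgebra.ι R _ * ExteriorAlgebra.ι R _) = _
    rw [Grassmann.gswap, smul_neg]
    rfl
  have hS : (-∑ i : Fin N, ∑ j : Fin N, M i j • (chibar R N i * chi R N j)) = ∑ i, y i := by
    rw [Finset.sum_congr rfl (fun i _ => Finset.sum_congr rfl (fun j _ => hzz i j))]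
    simp only [Finset.sum_neg_distrib, neg_neg, y]
  have hcy : ∀ i j, Commute (y i) (y j) := fun i j =>
    Commute.sum_left _ _ _ fun j1 _ => Commute.sum_right _ _ _ fun j2 _ =>
      ((Grassmann.commute_pair_pair _ _ _ _).smul_left _).smul_right _
  have h0y : ∀ i, y i * y i = 0 := by
    intro i
    show (∑ j : Fin N, M i j • z i j) * (∑ j : Fin N, M i j • z i j) = 0
    rw [Finset.sum_mul_sum]
    refine Finset.sum_eq_zero fun j1 _ => Finset.sum_eq_zero fun j2 _ => ?_
    rw [smul_mul_smul_comm,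
      show z i j1 * z i j2 = 0 from Grassmann.pair_repeat_zero _ _ _, smul_zero]
  have hmem : ∀ p : ℕ, (∑ i, y i) ^ p ∈ (⋀[R]^(2 * p) (Fin (2 * N) → R)) := by
    intro p
    have h2 : (∑ i, y i) ∈ (⋀[R]^2 (Fin (2 * N) → R)) := by
      refine Submodule.sum_mem _ fun i _ => Submodule.sum_mem _ fun j _ =>
        Submodule.smul_mem _ _ ?_
      show z i j ∈ LinearMap.range (ExteriorAlgebra.ι R :
        (Fin (2 * N) → R) →ₗ[R] ExteriorAlgebra R (Fin (2 * N) → R)) ^ 2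
      rw [pow_two]
      exact Submodule.mul_mem_mul (LinearMap.mem_range_self _ _)
        (LinearMap.mem_range_self _ _)
    have h3 := Submodule.pow_mem_pow _ h2 p
    rwa [← pow_mul] at h3
  have hvan : ∀ p, p ≠ N → berezin R (2 * N) ((∑ i, y i) ^ p) = 0 := fun p hp =>
    Grassmann.berezin_eq_zero (by omega) _ (hmem p)
  rw [hS, gExp, map_sum]
  simp only [LinearMap.map_smul]
  rw [Finset.sum_eq_single N
    (fun p _ hp => by rw [hvan p hp, smul_zero])
    (fun h => absurd (Finset.mem_range.mpr (by omega)) h)]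
  rw [Grassmann.sum_pow_card y hcy h0y, map_nsmul,
    show (List.ofFn y) = List.ofFn (fun i => ∑ j : Fin N, M i j • z i j) from rfl,
    Grassmann.list_prod_sum_expand (fun i j => M i j) z, map_sum]
  simp only [LinearMap.map_smul]
  have hber : ∀ g : Fin N → Fin N,
      berezin R (2 * N) ((List.ofFn fun i => z i (g i)).prod)
        = (Matrix.of (Grassmann.itl (Grassmann.uRow (R := R) g) Grassmann.wRow)).det :=
    fun g => Grassmann.berezin_pairs (Grassmann.uRow g) Grassmann.wRow
  rw [Finset.sum_congr rfl (fun g _ => by rw [hber g])]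
  have hsc : ∀ r : R,
      (algebraMap ℚ R ((N.factorial : ℚ))⁻¹) • ((N.factorial : ℕ) • r) = r := by
    intro r
    rw [nsmul_eq_mul, smul_eq_mul, ← mul_assoc,
      show ((N.factorial : ℕ) : R) = algebraMap ℚ R ((N.factorial : ℚ)) by
        simp [map_natCast],
      ← _root_.map_mul, inv_mul_cancel₀ (Nat.cast_ne_zero.mpr N.factorial_ne_zero), _root_.map_one,
      one_mul]
  rw [hsc]
  -- final combinatorial identity
  let emb : Equiv.Perm (Fin N) ↪ (Fin N → Fin N) :=
    ⟨fun σ => ⇑σ, fun a b h => Equiv.coe_fn_injective h⟩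
  rw [show (Finset.univ : Finset (Fin N → Fin N)).sum
        (fun g => (∏ i, M i (g i)) •
          (Matrix.of (Grassmann.itl (Grassmann.uRow (R := R) g) Grassmann.wRow)).det)
      = ∑ g ∈ (Finset.univ : Finset (Equiv.Perm (Fin N))).map emb,
          (∏ i, M i (g i)) •
            (Matrix.of (Grassmann.itl (Grassmann.uRow (R := R) g) Grassmann.wRow)).det from
    (Finset.sum_subset (Finset.subset_univ _) (fun g _ hg => by
      have hgi : ¬ Function.Injective g := by
        intro hinj
        exact hg (Finset.mem_map.mpr
          ⟨Equiv.ofBijective g (Finite.injective_iff_bijective.mp hinj),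
            Finset.mem_univ _, rfl⟩)
      rw [Grassmann.det_nonInj g hgi, smul_zero])).symm]
  rw [Finset.sum_map]
  rw [Finset.sum_congr rfl (fun σ _ => by
    rw [show emb σ = ⇑σ from rfl, Grassmann.det_perm σ])]
  rw [← Matrix.det_transpose M, Matrix.det_apply']
  refine Finset.sum_congr rfl fun σ _ => ?_
  rw [smul_eq_mul, mul_comm]
  congr 1
end

section
/- For every m ≥ 1, the sum over all fixed-point-free involutions σ of {1,…,2m} of (-1)^{cr(σ)} equals 1, where cr(σ) is the number of crossings of σ. -/
/-!
STATEMENT 4: For every `m ≥ 1`, the sum over all fixed-point-free involutions `σ` of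
`{1,…,2m}` of `(-1)^{cr(σ)}` equals `1`, where `cr(σ)` is the number of crossings.
-/

/-- The number of crossings of a (fixed-point-free) involution `σ` of `{1,…,2m}`:
the number of pairs of 2-cycles `{a,b}`, `{c,d}` with `a < b`, `c < d` and
`a < c < b < d`.  Such a pair is recorded exactly once, as the pair `(a, c)` with
`a < c < σ a < σ c`. -/
def crossings {m : ℕ} (σ : Equiv.Perm (Fin (2 * m))) : ℕ :=
  (Finset.univ.filter fun p : Fin (2 * m) × Fin (2 * m) =>
    p.1 < p.2 ∧ p.2 < σ p.1 ∧ σ p.1 < σ p.2).card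

section Stmt4Aux
open Equiv Finset

variable {m : ℕ}


open Equiv Finset

variable {m : ℕ}

/-- the adjacent-transposition matching, as a function -/
def pf (m : ℕ) (i : Fin (2*m)) : Fin (2*m) :=
  if h : i.val % 2 = 0 then ⟨i.val+1, by have := i.isLt; omega⟩
  else ⟨i.val-1, by have := i.isLt; omega⟩

lemma pf_val_even (i : Fin (2*m)) (h : i.val % 2 = 0) : (pf m i).val = i.val + 1 := by
  simp [pf, h]

lemma pf_val_odd (i : Fin (2*m)) (h : i.val % 2 = 1) : (pf m i).val = i.val - 1 := by
  simp [pf, h]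

lemma pf_invol : Function.Involutive (pf m) := by
  intro i
  rcases Nat.even_or_odd i.val with h | h
  · have h0 : i.val % 2 = 0 := Nat.even_iff.mp h
    have h1 : (pf m i).val = i.val + 1 := pf_val_even i h0
    apply Fin.ext
    rw [pf_val_odd (pf m i) (by omega), h1]
    omega
  · have h0 : i.val % 2 = 1 := Nat.odd_iff.mp h
    have h1 : (pf m i).val = i.val - 1 := pf_val_odd i h0
    apply Fin.ext
    rw [pf_val_even (pf m i) (by omega), h1]
    omega

/-- the adjacent matching as a permutation -/
def pp (m : ℕ) : Equiv.Perm (Fin (2*m)) := Function.Involutive.toPerm (pf m) pf_invol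

lemma pp_apply (i : Fin (2*m)) : pp m i = pf m i := rfl

lemma pp_val_le (i : Fin (2*m)) : (pp m i).val ≤ i.val + 1 := by
  rw [pp_apply]
  rcases Nat.even_or_odd i.val with h | h
  · rw [pf_val_even i (Nat.even_iff.mp h)]
  · rw [pf_val_odd i (Nat.odd_iff.mp h)]; omega

lemma pp_fpf (i : Fin (2*m)) : pp m i ≠ i := by
  intro h
  have := congrArg Fin.val h
  rw [pp_apply] at this
  rcases Nat.even_or_odd i.val with h2 | h2
  · rw [pf_val_even i (Nat.even_iff.mp h2)] at this; omega
  · have h0 := Nat.odd_iff.mp h2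
    rw [pf_val_odd i h0] at this; omega

lemma pp_mul_self : pp m * pp m = 1 := by
  ext i
  simpa [pp_apply, Equiv.Perm.mul_apply] using congrArg Fin.val (pf_invol i)

lemma crossings_pp : crossings (pp m) = 0 := by
  rw [crossings, Finset.card_eq_zero, Finset.filter_eq_empty_iff]
  rintro p -
  rintro ⟨h1, h2, -⟩
  have := pp_val_le p.1
  have h1' : p.1.val < p.2.val := h1
  have h2' : p.2.val < (pp m p.1).val := h2
  omega



lemma swap_ne' {α : Type*} [DecidableEq α] {x y z : α} (h1 : z ≠ x) (h2 : z ≠ y) :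
    Equiv.swap x y z = z := Equiv.swap_apply_of_ne_of_ne h1 h2

lemma forward (σ : Equiv.Perm (Fin (2*m))) (hσ : ∀ i, σ (σ i) = i)
    (a b : Fin (2*m)) (hab : (a:ℕ)+1 = b)
    (hax : a < σ a) (hbx : b < σ a) (hby : b < σ b)
    (hsmall : ∀ c, c < a → σ c < a)
    (p q : Fin (2*m)) (h1 : p < q) (h2 : q < σ p) (h3 : σ p < σ q)
    (hne : (p,q) ≠ (a,b)) :
    (Equiv.swap a b p < q ∧
      q < (Equiv.swap (σ a) (σ b) * σ * Equiv.swap (σ a) (σ b)) (Equiv.swap a b p) ∧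
      (Equiv.swap (σ a) (σ b) * σ * Equiv.swap (σ a) (σ b)) (Equiv.swap a b p)
        < (Equiv.swap (σ a) (σ b) * σ * Equiv.swap (σ a) (σ b)) q) ∧
    (Equiv.swap a b p, q) ≠ (a,b) := by
  have hab' : a ≠ b := fun h => by rw [h] at hab; omega
  have haltb : a < b := by rw [Fin.lt_def]; omega
  have hxy : σ a ≠ σ b := fun h => hab' (σ.injective h)
  have happ : ∀ z, (Equiv.swap (σ a) (σ b) * σ * Equiv.swap (σ a) (σ b)) z
      = Equiv.swap (σ a) (σ b) (σ (Equiv.swap (σ a) (σ b) z)) := fun z => rfl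
  have haNx : a ≠ σ a := ne_of_lt hax
  have haNy : a ≠ σ b := ne_of_lt (lt_trans haltb hby)
  have hbNx : b ≠ σ a := ne_of_lt hbx
  have hbNy : b ≠ σ b := ne_of_lt hby
  by_cases hpa : p = a
  · -- p = a
    subst hpa
    have hqb : q ≠ b := fun h => hne (by rw [h])
    have hbq : b < q := by
      have e1 : (p:ℕ) < q := h1
      have e2 : (q:ℕ) ≠ b := fun h => hqb (Fin.ext h)
      rw [Fin.lt_def]; omega
    have hqx : q < σ p := h2
    have hqNy : q ≠ σ b := by
      intro h
      have hb : σ q = b := by rw [h, hσ]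
      rw [hb] at h3
      exact absurd (lt_trans hbx h3) (lt_irrefl b)
    have hσqNx : σ q ≠ σ p := ne_of_gt h3
    have hσqNy : σ q ≠ σ b := fun h => hqb (σ.injective h)
    have e1 : Equiv.swap p b p = b := Equiv.swap_apply_left p b
    have e2 : (Equiv.swap (σ p) (σ b) * σ * Equiv.swap (σ p) (σ b)) b = σ p := by
      rw [happ, swap_ne' hbNx hbNy, Equiv.swap_apply_right]
    have e3 : (Equiv.swap (σ p) (σ b) * σ * Equiv.swap (σ p) (σ b)) q = σ q := by
      rw [happ, swap_ne' (ne_of_lt hqx) hqNy, swap_ne' hσqNx hσqNy]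
    rw [e1, e2, e3]
    exact ⟨⟨hbq, hqx, h3⟩, fun h => hab' (congrArg Prod.fst h).symm⟩
  · by_cases hpb : p = b
    · -- p = b
      subst hpb
      -- here p is gone; b is replaced? no: hpb : p = b eliminates b, keeping p
      -- hypotheses now mention p in place of b
      have hbq : p < q := h1
      have hqNa : q ≠ a := ne_of_gt (lt_trans haltb hbq)
      have hqNx : q ≠ σ a := by
        intro h
        have ha : σ q = a := by rw [h, hσ]
        rw [ha] at h3
        exact absurd (lt_trans (lt_trans haltb hby) h3) (lt_irrefl _)
      have hqy : q < σ p := h2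
      have hσqNx : σ q ≠ σ a := fun h => hqNa (σ.injective h)
      have hσqNy : σ q ≠ σ p := ne_of_gt h3
      have e1 : Equiv.swap a p p = a := Equiv.swap_apply_right a p
      have e2 : (Equiv.swap (σ a) (σ p) * σ * Equiv.swap (σ a) (σ p)) a = σ p := by
        rw [happ, swap_ne' haNx haNy, Equiv.swap_apply_left]
      have e3 : (Equiv.swap (σ a) (σ p) * σ * Equiv.swap (σ a) (σ p)) q = σ q := by
        rw [happ, swap_ne' hqNx (ne_of_lt hqy), swap_ne' hσqNx hσqNy]
      rw [e1, e2, e3]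
      refine ⟨⟨lt_trans haltb hbq, hqy, h3⟩, fun h => ?_⟩
      have hq : q = p := congrArg Prod.snd h
      exact absurd (hq ▸ hbq) (lt_irrefl p)
    · -- p ∉ {a, b}
      have hpval : (p:ℕ) < a ∨ (b:ℕ) < p := by
        have e1 : (p:ℕ) ≠ a := fun h => hpa (Fin.ext h)
        have e2 : (p:ℕ) ≠ b := fun h => hpb (Fin.ext h)
        omega
      have key : Equiv.swap a b p = p ∧
          (Equiv.swap (σ a) (σ b) * σ * Equiv.swap (σ a) (σ b)) p = σ p ∧
          (Equiv.swap (σ a) (σ b) * σ * Equiv.swap (σ a) (σ b)) q = σ q := by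
        rcases hpval with hlt | hgt
        · -- p < a
          have hpa' : p < a := hlt
          have hsp : σ p < a := hsmall p hpa'
          have hq : q < a := lt_trans h2 hsp
          have hsq : σ q < a := hsmall q hq
          have hay : a < σ b := lt_trans haltb hby
          refine ⟨swap_ne' hpa hpb, ?_, ?_⟩
          · rw [happ, swap_ne' (ne_of_lt (lt_trans hpa' hax)) (ne_of_lt (lt_trans hpa' hay)),
              swap_ne' (ne_of_lt (lt_trans hsp hax)) (ne_of_lt (lt_trans hsp hay))]
          · rw [happ, swap_ne' (ne_of_lt (lt_trans hq hax)) (ne_of_lt (lt_trans hq hay)),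
              swap_ne' (ne_of_lt (lt_trans hsq hax)) (ne_of_lt (lt_trans hsq hay))]
        · -- b < p
          have hbp : b < p := hgt
          have hbq : b < q := lt_trans hbp h1
          have hpNx : p ≠ σ a := by
            intro h
            have ha : σ p = a := by rw [h, hσ]
            rw [ha] at h2
            exact absurd (lt_trans (lt_trans haltb hbq) h2) (lt_irrefl _)
          have hpNy : p ≠ σ b := by
            intro h
            have hb : σ p = b := by rw [h, hσ]
            rw [hb] at h2
            exact absurd (lt_trans hbq h2) (lt_irrefl _)
          have hqNx : q ≠ σ a := by
            intro h
            have ha : σ q = a := by rw [h, hσ]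
            rw [ha] at h3
            have hh : b < σ p := lt_trans hbq h2
            exact absurd (lt_trans haltb (lt_trans hh h3)) (lt_irrefl _)
          have hqNy : q ≠ σ b := by
            intro h
            have hb : σ q = b := by rw [h, hσ]
            rw [hb] at h3
            have hh : b < σ p := lt_trans hbq h2
            exact absurd (lt_trans hh h3) (lt_irrefl _)
          have hσpNx : σ p ≠ σ a := fun h => hpa (σ.injective h)
          have hσpNy : σ p ≠ σ b := fun h => hpb (σ.injective h)
          have hσqNx : σ q ≠ σ a := fun h => (ne_of_gt (lt_trans haltb hbq)) (σ.injective h)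
          have hσqNy : σ q ≠ σ b := fun h => (ne_of_gt hbq) (σ.injective h)
          refine ⟨swap_ne' hpa hpb, ?_, ?_⟩
          · rw [happ, swap_ne' hpNx hpNy, swap_ne' hσpNx hσpNy]
          · rw [happ, swap_ne' hqNx hqNy, swap_ne' hσqNx hσqNy]
      rw [key.1, key.2.1, key.2.2]
      exact ⟨⟨h1, h2, h3⟩, fun h => hpa (congrArg Prod.fst h)⟩
def crossSet (σ : Equiv.Perm (Fin (2*m))) : Finset (Fin (2*m) × Fin (2*m)) :=
  Finset.univ.filter fun p : Fin (2*m) × Fin (2*m) =>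
    p.1 < p.2 ∧ p.2 < σ p.1 ∧ σ p.1 < σ p.2

lemma mem_crossSet {σ : Equiv.Perm (Fin (2*m))} {p : Fin (2*m) × Fin (2*m)} :
    p ∈ crossSet σ ↔ p.1 < p.2 ∧ p.2 < σ p.1 ∧ σ p.1 < σ p.2 := by
  simp [crossSet]

lemma crossings_eq (σ : Equiv.Perm (Fin (2 * m))) : crossings σ = (crossSet σ).card := rfl

lemma sign_flip (σ : Equiv.Perm (Fin (2*m))) (hσ : ∀ i, σ (σ i) = i)
    (a b : Fin (2*m)) (hab : (a:ℕ)+1 = b)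
    (hax : a < σ a) (hbx : b < σ a) (hby : b < σ b)
    (hsmall : ∀ c, c < a → σ c < a) :
    ((-1:ℤ) ^ crossings σ) +
      (-1) ^ crossings (Equiv.swap (σ a) (σ b) * σ * Equiv.swap (σ a) (σ b)) = 0 := by
  set σ' := Equiv.swap (σ a) (σ b) * σ * Equiv.swap (σ a) (σ b) with hσ'def
  have hab' : a ≠ b := fun h => by rw [h] at hab; omega
  have haltb : a < b := by rw [Fin.lt_def]; omega
  have hxy : σ a ≠ σ b := fun h => hab' (σ.injective h)
  have haNx : a ≠ σ a := ne_of_lt hax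
  have haNy : a ≠ σ b := ne_of_lt (lt_trans haltb hby)
  have hbNx : b ≠ σ a := ne_of_lt hbx
  have hbNy : b ≠ σ b := ne_of_lt hby
  have happ : ∀ z, σ' z = Equiv.swap (σ a) (σ b) (σ (Equiv.swap (σ a) (σ b) z)) := fun z => rfl
  have hσ'a : σ' a = σ b := by
    rw [happ, swap_ne' haNx haNy, Equiv.swap_apply_left]
  have hσ'b : σ' b = σ a := by
    rw [happ, swap_ne' hbNx hbNy, Equiv.swap_apply_right]
  have hσ'2 : ∀ i, σ' (σ' i) = i := by
    intro i
    rw [happ, happ, Equiv.swap_apply_self, hσ, Equiv.swap_apply_self]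
  have hsmall' : ∀ c, c < a → σ' c = σ c := by
    intro c hc
    have hay : a < σ b := lt_trans haltb hby
    have hsc := hsmall c hc
    rw [happ, swap_ne' (ne_of_lt (lt_trans hc hax)) (ne_of_lt (lt_trans hc hay)),
      swap_ne' (ne_of_lt (lt_trans hsc hax)) (ne_of_lt (lt_trans hsc hay))]
  have hsmall'' : ∀ c, c < a → σ' c < a := fun c hc => hsmall' c hc ▸ hsmall c hc
  have hax' : a < σ' a := hσ'a ▸ lt_trans haltb hby
  have hbx' : b < σ' a := hσ'a ▸ hby
  have hby' : b < σ' b := hσ'b ▸ hbx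
  -- conjugating σ' gives back σ
  have hback : Equiv.swap (σ' a) (σ' b) * σ' * Equiv.swap (σ' a) (σ' b) = σ := by
    rw [hσ'a, hσ'b, Equiv.swap_comm (σ b) (σ a), hσ'def]
    ext z
    simp [Equiv.Perm.mul_apply]
  -- the bijection between the two erased crossing sets
  have hcard : ((crossSet σ).erase (a,b)).card = ((crossSet σ').erase (a,b)).card := by
    apply Finset.card_nbij' (i := fun p => (Equiv.swap a b p.1, p.2))
      (j := fun p => (Equiv.swap a b p.1, p.2))
    · intro p hp
      rw [Finset.mem_coe, Finset.mem_erase, mem_crossSet] at hp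
      obtain ⟨hpne, hc1, hc2, hc3⟩ := hp
      obtain ⟨⟨g1, g2, g3⟩, g4⟩ := forward σ hσ a b hab hax hbx hby hsmall p.1 p.2 hc1 hc2 hc3
        (by rwa [← Prod.mk.eta (p := p)] at hpne)
      rw [Finset.mem_coe, Finset.mem_erase, mem_crossSet]
      exact ⟨g4, g1, g2, g3⟩
    · intro p hp
      rw [Finset.mem_coe, Finset.mem_erase, mem_crossSet] at hp
      obtain ⟨hpne, hc1, hc2, hc3⟩ := hp
      obtain ⟨⟨g1, g2, g3⟩, g4⟩ := forward σ' hσ'2 a b hab hax' hbx' hby' hsmall'' p.1 p.2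
        hc1 hc2 hc3 (by rwa [← Prod.mk.eta (p := p)] at hpne)
      rw [hback] at g2 g3
      rw [Finset.mem_coe, Finset.mem_erase, mem_crossSet]
      exact ⟨g4, g1, g2, g3⟩
    · intro p hp
      simp [Equiv.swap_apply_self]
    · intro p hp
      simp [Equiv.swap_apply_self]
  have hmem1 : (a,b) ∈ crossSet σ ↔ σ a < σ b := by
    rw [mem_crossSet]
    exact ⟨fun h => h.2.2, fun h => ⟨haltb, hbx, h⟩⟩
  have hmem2 : (a,b) ∈ crossSet σ' ↔ σ b < σ a := by
    rw [mem_crossSet, hσ'a, hσ'b]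
    exact ⟨fun h => h.2.2, fun h => ⟨haltb, hby, h⟩⟩
  rw [crossings_eq, crossings_eq]
  rcases lt_or_gt_of_ne hxy with hlt | hgt
  · have m1 : (a,b) ∈ crossSet σ := hmem1.mpr hlt
    have m2 : (a,b) ∉ crossSet σ' := fun h => absurd (hmem2.mp h) (not_lt_of_gt hlt)
    have c1 : ((crossSet σ).erase (a,b)).card + 1 = (crossSet σ).card :=
      Finset.card_erase_add_one m1
    have c2 : ((crossSet σ').erase (a,b)) = crossSet σ' := Finset.erase_eq_of_notMem m2
    rw [← c1, hcard, c2, pow_succ]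
    ring
  · have m1 : (a,b) ∉ crossSet σ := fun h => absurd (hmem1.mp h) (not_lt_of_gt hgt)
    have m2 : (a,b) ∈ crossSet σ' := hmem2.mpr hgt
    have c1 : ((crossSet σ').erase (a,b)).card + 1 = (crossSet σ').card :=
      Finset.card_erase_add_one m2
    have c2 : ((crossSet σ).erase (a,b)) = crossSet σ := Finset.erase_eq_of_notMem m1
    rw [← c1, ← hcard, c2, pow_succ]
    ring
-- the set of points where σ differs from pp
noncomputable def diffSet (σ : Equiv.Perm (Fin (2*m))) : Finset (Fin (2*m)) :=
  Finset.univ.filter fun c => σ c ≠ pp m c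

lemma diffSet_nonempty {σ : Equiv.Perm (Fin (2*m))} (h : σ ≠ pp m) : (diffSet σ).Nonempty := by
  by_contra hc
  rw [Finset.not_nonempty_iff_eq_empty, diffSet, Finset.filter_eq_empty_iff] at hc
  exact h (Equiv.ext fun c => by have := hc (Finset.mem_univ c); simpa using this)

noncomputable def aOf (σ : Equiv.Perm (Fin (2*m))) (h : σ ≠ pp m) : Fin (2*m) :=
  (diffSet σ).min' (diffSet_nonempty h)

lemma aOf_ne {σ : Equiv.Perm (Fin (2*m))} (h : σ ≠ pp m) : σ (aOf σ h) ≠ pp m (aOf σ h) := by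
  have := Finset.min'_mem (diffSet σ) (diffSet_nonempty h)
  simp only [diffSet, Finset.mem_filter] at this
  exact this.2

lemma aOf_min {σ : Equiv.Perm (Fin (2*m))} (h : σ ≠ pp m) :
    ∀ c, c < aOf σ h → σ c = pp m c := by
  intro c hc
  by_contra hne
  have : c ∈ diffSet σ := by
    simp only [diffSet, Finset.mem_filter]; exact ⟨Finset.mem_univ c, hne⟩
  exact absurd hc (not_lt_of_ge (Finset.min'_le _ _ this))

/-- all the structural facts about the minimal differing position -/
lemma struct (σ : Equiv.Perm (Fin (2*m))) (hσ : ∀ i, σ (σ i) = i)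
    (hfpf : ∀ i, σ i ≠ i) (hne : σ ≠ pp m) :
    ((aOf σ hne : ℕ)) % 2 = 0 ∧
    ((aOf σ hne : ℕ)) + 1 = (pp m (aOf σ hne) : ℕ) ∧
    aOf σ hne < σ (aOf σ hne) ∧
    pp m (aOf σ hne) < σ (aOf σ hne) ∧
    pp m (aOf σ hne) < σ (pp m (aOf σ hne)) ∧
    (∀ c, c < aOf σ hne → σ c < aOf σ hne) := by
  set a := aOf σ hne with hadef
  have hane := aOf_ne hne
  have hamin := aOf_min hne
  -- a is even
  have haeven : (a:ℕ) % 2 = 0 := by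
    by_contra hodd
    have hodd' : (a:ℕ) % 2 = 1 := by omega
    have hpos : 0 < (a:ℕ) := by omega
    set c : Fin (2*m) := ⟨(a:ℕ)-1, by have := a.isLt; omega⟩ with hcdef
    have hca : c < a := by rw [Fin.lt_def]; simp [hcdef]; omega
    have hceven : (c:ℕ) % 2 = 0 := by simp [hcdef]; omega
    have h1 : σ c = pp m c := hamin c hca
    have h2 : pp m c = a := by
      apply Fin.ext
      rw [pp_apply, pf_val_even c hceven]
      simp [hcdef]
      omega
    have h3 : σ a = c := by rw [← h1.trans h2, hσ]
    have h4 : pp m a = c := by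
      apply Fin.ext
      rw [pp_apply, pf_val_odd a hodd']
    exact hane (h3.trans h4.symm)
  have hb : (a:ℕ) + 1 = (pp m a : ℕ) := by
    rw [pp_apply, pf_val_even a haeven]
  -- small closure
  have hsmall : ∀ c, c < a → σ c < a := by
    intro c hc
    have h1 : σ c = pp m c := hamin c hc
    have hc' : (c:ℕ) < a := hc
    rw [Fin.lt_def, h1, pp_apply]
    rcases Nat.even_or_odd (c:ℕ) with he | ho
    · rw [pf_val_even c (Nat.even_iff.mp he)]
      have := Nat.even_iff.mp he
      omega
    · rw [pf_val_odd c (Nat.odd_iff.mp ho)]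
      omega
  -- a < σ a
  have hax : a < σ a := by
    have h1 : σ a ≠ a := hfpf a
    rcases lt_trichotomy (σ a) a with hlt | heq | hgt
    · exfalso
      have h3 := hsmall (σ a) hlt
      rw [hσ] at h3
      exact absurd h3 (lt_irrefl a)
    · exact absurd heq h1
    · exact hgt
  have hbx : pp m a < σ a := by
    have h1 : σ a ≠ pp m a := hane
    have h2 : (a:ℕ) < σ a := hax
    have h3 : (σ a : ℕ) ≠ (pp m a : ℕ) := fun h => h1 (Fin.ext h)
    rw [Fin.lt_def]
    omega
  have hby : pp m a < σ (pp m a) := by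
    set b := pp m a with hbdef
    have h1 : σ b ≠ b := hfpf b
    have h2 : σ b ≠ a := by
      intro h
      have : σ a = b := by rw [← h, hσ]
      exact hane this
    have h3 : ¬ (σ b < a) := by
      intro h
      have h5 := hsmall (σ b) h
      rw [hσ] at h5
      have h6 : (b:ℕ) < a := h5
      have h7 : (a:ℕ) < b := by omega
      omega
    have h4 : ¬ ((σ b : ℕ) < a) := fun h => h3 (by rw [Fin.lt_def]; exact h)
    have h5 : (σ b : ℕ) ≠ a := fun h => h2 (Fin.ext h)
    have h6 : (σ b : ℕ) ≠ b := fun h => h1 (Fin.ext h)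
    rw [Fin.lt_def]
    omega
  exact ⟨haeven, hb, hax, hbx, hby, hsmall⟩

/-- the sign-reversing involution -/
noncomputable def gmap (σ : Equiv.Perm (Fin (2*m))) (hne : σ ≠ pp m) : Equiv.Perm (Fin (2*m)) :=
  Equiv.swap (σ (aOf σ hne)) (σ (pp m (aOf σ hne))) * σ *
    Equiv.swap (σ (aOf σ hne)) (σ (pp m (aOf σ hne)))

lemma gmap_master (σ : Equiv.Perm (Fin (2*m))) (hσ : σ * σ = 1)
    (hfpf : ∀ i, σ i ≠ i) (hne : σ ≠ pp m) :
    (gmap σ hne * gmap σ hne = 1) ∧ (∀ i, gmap σ hne i ≠ i) ∧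
    (gmap σ hne ≠ pp m) ∧ (gmap σ hne ≠ σ) ∧
    (∀ h2, gmap (gmap σ hne) h2 = σ) ∧
    ((-1:ℤ) ^ crossings σ + (-1) ^ crossings (gmap σ hne) = 0) := by
  have hσ2 : ∀ i, σ (σ i) = i := fun i => by
    have := congrArg (fun τ => τ i) hσ
    simpa [Equiv.Perm.mul_apply] using this
  obtain ⟨haeven, hb, hax, hbx, hby, hsmall⟩ := struct σ hσ2 hfpf hne
  set a := aOf σ hne with hadef
  set b := pp m a with hbdef
  have haltb : a < b := by rw [Fin.lt_def]; omega
  have hay : a < σ b := lt_trans haltb hby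
  have haNx : a ≠ σ a := ne_of_lt hax
  have haNy : a ≠ σ b := ne_of_lt hay
  have hbNx : b ≠ σ a := ne_of_lt hbx
  have hbNy : b ≠ σ b := ne_of_lt hby
  set g := gmap σ hne with hgdef
  have happ : ∀ z, g z = Equiv.swap (σ a) (σ b) (σ (Equiv.swap (σ a) (σ b) z)) := fun z => rfl
  have hg2 : ∀ i, g (g i) = i := by
    intro i
    rw [happ, happ, Equiv.swap_apply_self, hσ2, Equiv.swap_apply_self]
  have hga : g a = σ b := by rw [happ, swap_ne' haNx haNy, Equiv.swap_apply_left]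
  have hgb : g b = σ a := by rw [happ, swap_ne' hbNx hbNy, Equiv.swap_apply_right]
  have hgfpf : ∀ i, g i ≠ i := by
    intro i h
    rw [happ] at h
    have := congrArg (Equiv.swap (σ a) (σ b)) h
    rw [Equiv.swap_apply_self] at this
    exact hfpf _ this
  have hgmul : g * g = 1 := Equiv.ext fun i => hg2 i
  have hsmallg : ∀ c, c < a → g c = σ c := by
    intro c hc
    have hsc := hsmall c hc
    rw [happ, swap_ne' (ne_of_lt (lt_trans hc hax)) (ne_of_lt (lt_trans hc hay)),
      swap_ne' (ne_of_lt (lt_trans hsc hax)) (ne_of_lt (lt_trans hsc hay))]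
  have hgneqpp : g ≠ pp m := by
    intro h
    have : g a = pp m a := by rw [h]
    rw [hga, ← hbdef] at this
    exact (ne_of_gt hby) this
  have hgneqσ : g ≠ σ := by
    intro h
    have : g a = σ a := by rw [h]
    rw [hga] at this
    exact (ne_of_lt haltb) (σ.injective this).symm
  -- aOf of g is a
  have haOfg : aOf g hgneqpp = a := by
    have h1 : g a ≠ pp m a := by
      rw [hga, ← hbdef]
      exact fun h => (ne_of_gt hby) h
    have hmem : a ∈ diffSet g := by
      rw [diffSet, Finset.mem_filter]; exact ⟨Finset.mem_univ a, h1⟩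
    apply le_antisymm
    · exact Finset.min'_le _ _ hmem
    · by_contra hcon
      push_neg at hcon
      have hlt : aOf g hgneqpp < a := hcon
      have h2 := aOf_ne hgneqpp
      have h3 : g (aOf g hgneqpp) = σ (aOf g hgneqpp) := hsmallg _ hlt
      have h4 : σ (aOf g hgneqpp) = pp m (aOf g hgneqpp) := aOf_min hne _ hlt
      exact h2 (h3.trans h4)
  have hback : ∀ h2, gmap g h2 = σ := by
    intro h2
    have heq : gmap g h2 = gmap g hgneqpp := rfl
    rw [heq]
    rw [gmap]
    have e : aOf g hgneqpp = a := haOfg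
    rw [e, hga, ← hbdef, hgb, Equiv.swap_comm (σ b) (σ a)]
    rw [hgdef, gmap, ← hadef, ← hbdef]
    ext z
    simp [Equiv.Perm.mul_apply]
  exact ⟨hgmul, hgfpf, hgneqpp, hgneqσ, hback,
    sign_flip σ hσ2 a b hb hax hbx hby hsmall⟩

end Stmt4Aux

theorem stmt4 (m : ℕ) (hm : 1 ≤ m) :
    (∑ σ : Equiv.Perm (Fin (2 * m)),
        if σ * σ = 1 ∧ ∀ i, σ i ≠ i then (-1 : ℤ) ^ crossings σ else 0) = 1 := by
  classical
  rw [← Finset.sum_filter]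
  set s := Finset.univ.filter
    (fun σ : Equiv.Perm (Fin (2*m)) => σ * σ = 1 ∧ ∀ i, σ i ≠ i) with hsdef
  have hpp_mem : pp m ∈ s := by
    rw [hsdef, Finset.mem_filter]
    exact ⟨Finset.mem_univ _, pp_mul_self, pp_fpf⟩
  rw [← Finset.add_sum_erase s _ hpp_mem]
  have h1 : (-1:ℤ) ^ crossings (pp m) = 1 := by rw [crossings_pp]; rfl
  have h0 : ∑ σ ∈ s.erase (pp m), (-1:ℤ) ^ crossings σ = 0 := by
    have hfacts : ∀ σ (hσm : σ ∈ s.erase (pp m)),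
        (gmap σ (Finset.mem_erase.mp hσm).1 * gmap σ (Finset.mem_erase.mp hσm).1 = 1) ∧
        (∀ i, gmap σ (Finset.mem_erase.mp hσm).1 i ≠ i) ∧
        (gmap σ (Finset.mem_erase.mp hσm).1 ≠ pp m) ∧
        (gmap σ (Finset.mem_erase.mp hσm).1 ≠ σ) ∧
        (∀ h2, gmap (gmap σ (Finset.mem_erase.mp hσm).1) h2 = σ) ∧
        ((-1:ℤ) ^ crossings σ +
          (-1) ^ crossings (gmap σ (Finset.mem_erase.mp hσm).1) = 0) := by
      intro σ hσm
      have hne := (Finset.mem_erase.mp hσm).1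
      have hmem := Finset.mem_filter.mp (Finset.mem_erase.mp hσm).2
      exact gmap_master σ hmem.2.1 hmem.2.2 hne
    have gmem : ∀ σ (hσm : σ ∈ s.erase (pp m)),
        gmap σ (Finset.mem_erase.mp hσm).1 ∈ s.erase (pp m) := by
      intro σ hσm
      obtain ⟨hmul, hfpf, hnepp, -, -, -⟩ := hfacts σ hσm
      exact Finset.mem_erase.mpr ⟨hnepp, Finset.mem_filter.mpr ⟨Finset.mem_univ _, hmul, hfpf⟩⟩
    exact Finset.sum_involution (fun σ hσm => gmap σ (Finset.mem_erase.mp hσm).1)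
      (fun σ hσm => (hfacts σ hσm).2.2.2.2.2)
      (fun σ hσm _ => (hfacts σ hσm).2.2.2.1)
      gmem
      (fun σ hσm => (hfacts σ hσm).2.2.2.2.1 _)
  rw [h0, h1, add_zero]
end

section
/- (Lindström–Gessel–Viennot lemma, acyclic case) Let G be a finite acyclic digraph on vertices {1,…,n} with formal edge weights, M the weighted path matrix (M_{ij} = Σ_{paths P: i⇝j} wt(P), a polynomial since G is acyclic), and let 𝒜 = {a₁ < … < a_p}, ℬ = {b₁ < … < b_p} ⊆ {1,…,n}. Then det(M_{𝒜ℬ}) = Σ_𝐏 sgn(𝐏) wt(𝐏), the sum running over all self-avoiding p-paths 𝐏 from 𝒜 to ℬ. -/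
open Matrix

/-!
STATEMENT 8 (Lindström–Gessel–Viennot lemma, acyclic case): for a finite *acyclic*
digraph `G` on vertices `{1,…,n}` (multiple edges allowed, encoded by a finite edge type
`E` and maps `src tgt : E → Fin n`) with formal edge weights, weighted path matrix
`M i j = ∑_{paths P : i ⇝ j} wt(P)` (a finite sum since `G` is acyclic), and subsets
`𝒜 = {a₁ < … < a_p}`, `ℬ = {b₁ < … < b_p}`,
`det(M_{𝒜ℬ}) = ∑_𝐏 sgn(𝐏) wt(𝐏)`,
the sum running over all self-avoiding `p`-paths `𝐏` from `𝒜` to `ℬ`.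
-/

universe u

variable {n : ℕ} {E : Type u} [Fintype E] [DecidableEq E]

/-- `IsWalk src tgt a l b` : the list of edges `l` can be traversed consecutively,
starting at vertex `a` and ending at vertex `b` (a *path* from `a` to `b`). -/
def IsWalk (src tgt : E → Fin n) : Fin n → List E → Fin n → Prop
  | a, [], b => a = b
  | a, e :: l, b => src e = a ∧ IsWalk src tgt (tgt e) l b

/-- The weight of a path: the product of the weights of its edges. -/
noncomputable def wt (l : List E) : MvPolynomial E ℚ :=
  (l.map MvPolynomial.X).prod

/-- The weighted path matrix: `M i j = ∑_{paths P : i ⇝ j} wt(P)` (in an acyclic digraph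
there are finitely many paths between two given vertices, so this `finsum` is the
expected finite sum). -/
noncomputable def pathMat (src tgt : E → Fin n) :
    Matrix (Fin n) (Fin n) (MvPolynomial E ℚ) := fun i j =>
  ∑ᶠ P : {l : List E // IsWalk src tgt i l j}, wt P.1

/-- The set of vertices visited by a path from `a` with edge list `l`. -/
def pathVerts (tgt : E → Fin n) (a : Fin n) (l : List E) : Finset (Fin n) :=
  (a :: l.map tgt).toFinset

/-- A self-avoiding `p`-path from `A` to `B` (both of cardinality `p`): a `p`-tuple of
self-avoiding, pairwise vertex-disjoint paths, the `i`-th path going from the `i`-th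
smallest element of `A` to the `σ(i)`-th smallest element of `B` for a permutation
`σ = σ_𝐏`. -/
structure SAPath (src tgt : E → Fin n) (A B : Finset (Fin n)) (p : ℕ)
    (hA : A.card = p) (hB : B.card = p) where
  /-- the permutation `σ_𝐏` matching starting points with endpoints -/
  perm : Equiv.Perm (Fin p)
  /-- the edge lists of the `p` paths -/
  path : Fin p → List E
  walk : ∀ i, IsWalk src tgt (A.orderIsoOfFin hA i) (path i) (B.orderIsoOfFin hB (perm i))
  selfavoid : ∀ i, (((A.orderIsoOfFin hA i : Fin n)) :: (path i).map tgt).Nodup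
  pathdisj : ∀ i j, i ≠ j →
    Disjoint (pathVerts tgt (A.orderIsoOfFin hA i) (path i))
      (pathVerts tgt (A.orderIsoOfFin hA j) (path j))

set_option linter.unusedSectionVars false

namespace LGV

variable {src tgt : E → Fin n}

theorem walk_append {a c : Fin n} {l1 l2 : List E} :
    IsWalk src tgt a (l1 ++ l2) c ↔ ∃ b, IsWalk src tgt a l1 b ∧ IsWalk src tgt b l2 c := by
  induction l1 generalizing a with
  | nil => simp [IsWalk]
  | cons e l ih => simp [IsWalk, ih, and_assoc]

theorem walk_end_unique {a b b' : Fin n} {l : List E} (h : IsWalk src tgt a l b)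
    (h' : IsWalk src tgt a l b') : b = b' := by
  induction l generalizing a with
  | nil => exact h.symm.trans h'
  | cons e l ih => exact ih h.2 h'.2

theorem walk_end_mem {a b : Fin n} {l : List E} (h : IsWalk src tgt a l b) :
    b ∈ a :: l.map tgt := by
  induction l generalizing a with
  | nil => have : a = b := h; simp [this]
  | cons e l ih => exact List.mem_cons.2 (.inr (ih h.2))

theorem walk_nodup (hacyc : ∀ (v : Fin n) (l : List E), IsWalk src tgt v l v → l = [])
    {a b : Fin n} {l : List E} (h : IsWalk src tgt a l b) : (a :: l.map tgt).Nodup := by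
  induction l generalizing a with
  | nil => simp
  | cons e l ih =>
    obtain ⟨he, hw⟩ := h
    refine List.nodup_cons.2 ⟨?_, ih hw⟩
    intro hmem
    simp only [List.map_cons, List.mem_cons, List.mem_map] at hmem
    obtain hae | ⟨e', he', hte'⟩ := hmem
    · have : IsWalk src tgt a [e] a := ⟨he, hae.symm⟩
      simpa using hacyc a [e] this
    · obtain ⟨s, t, rfl⟩ := List.append_of_mem he'
      have h1 : IsWalk src tgt a ((e :: s ++ [e']) ++ t) b := by
        have : (e :: s ++ [e']) ++ t = e :: (s ++ e' :: t) := by simp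
        rw [this]; exact ⟨he, hw⟩
      obtain ⟨c, hc1, hc2⟩ := walk_append.1 h1
      obtain ⟨d, hd1, hd2⟩ := walk_append.1 hc1
      obtain ⟨hsrc, htgt⟩ : src e' = d ∧ IsWalk src tgt (tgt e') [] c := hd2
      have hca : c = a := by
        have : tgt e' = c := htgt
        rw [← this, hte']
      subst hca
      simpa using hacyc c (e :: s ++ [e']) hc1

theorem walk_length_le (hacyc : ∀ (v : Fin n) (l : List E), IsWalk src tgt v l v → l = [])
    {a b : Fin n} {l : List E} (h : IsWalk src tgt a l b) : l.length ≤ n := by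
  have := (walk_nodup hacyc h).length_le_card
  simpa using Nat.le_of_succ_le this

theorem walk_finite (hacyc : ∀ (v : Fin n) (l : List E), IsWalk src tgt v l v → l = [])
    (a b : Fin n) : {l : List E | IsWalk src tgt a l b}.Finite :=
  (List.finite_length_le E n).subset fun _ hl => walk_length_le hacyc hl

theorem walk_firstsplit (q : Fin n → Prop) {a b : Fin n} {l : List E}
    (h : IsWalk src tgt a l b) (hex : ∃ u ∈ a :: l.map tgt, q u) :
    ∃ v l1 l2, l = l1 ++ l2 ∧ IsWalk src tgt a l1 v ∧ IsWalk src tgt v l2 b ∧ q v ∧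
      ∀ u ∈ a :: l1.map tgt, q u → u = v := by
  induction l generalizing a with
  | nil =>
    obtain ⟨u, hu, hq⟩ := hex
    simp only [List.map_nil, List.mem_singleton] at hu
    exact ⟨a, [], [], rfl, rfl, h, hu ▸ hq, by simp +contextual⟩
  | cons e l ih =>
    by_cases hqa : q a
    · exact ⟨a, [], e :: l, rfl, rfl, h, hqa, by simp +contextual⟩
    · have hex' : ∃ u ∈ tgt e :: l.map tgt, q u := by
        obtain ⟨u, hu, hq⟩ := hex
        refine ⟨u, ?_, hq⟩
        simp only [List.map_cons, List.mem_cons] at hu ⊢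
        rcases hu with rfl | hu
        · exact absurd hq hqa
        · exact hu
      obtain ⟨v, l1, l2, rfl, h1, h2, hqv, hfirst⟩ := ih h.2 hex'
      refine ⟨v, e :: l1, l2, rfl, ⟨h.1, h1⟩, h2, hqv, ?_⟩
      intro u hu hq
      simp only [List.map_cons, List.mem_cons] at hu
      rcases hu with rfl | hu
      · exact absurd hq hqa
      · exact hfirst u (List.mem_cons.2 hu) hq

theorem walk_split {a b v : Fin n} {l : List E} (h : IsWalk src tgt a l b)
    (hv : v ∈ a :: l.map tgt) :
    ∃ l1 l2, l = l1 ++ l2 ∧ IsWalk src tgt a l1 v ∧ IsWalk src tgt v l2 b := by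
  obtain ⟨v', l1, l2, rfl, h1, h2, rfl, -⟩ := walk_firstsplit (· = v) h ⟨v, hv, rfl⟩
  exact ⟨l1, l2, rfl, h1, h2⟩

theorem append_eq_prefix_comparable {α : Type*} {x1 x2 x1' x2' : List α}
    (h : x1 ++ x2 = x1' ++ x2') : x1 <+: x1' ∨ x1' <+: x1 := by
  induction x1 generalizing x1' with
  | nil => exact .inl List.nil_prefix
  | cons x t ih =>
    cases x1' with
    | nil => exact .inr List.nil_prefix
    | cons y t' =>
      simp only [List.cons_append, List.cons.injEq] at h
      rcases ih h.2 with hp | hp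
      · exact .inl (List.cons_prefix_cons.2 ⟨h.1, hp⟩)
      · exact .inr (List.cons_prefix_cons.2 ⟨h.1.symm, hp⟩)

theorem walk_split_unique (hacyc : ∀ (v : Fin n) (l : List E), IsWalk src tgt v l v → l = [])
    {a v : Fin n} {l1 l1' l2 l2' : List E} (h1 : IsWalk src tgt a l1 v)
    (h1' : IsWalk src tgt a l1' v) (heq : l1 ++ l2 = l1' ++ l2') : l1 = l1' := by
  have haux : ∀ {m1 m2 : List E}, IsWalk src tgt a m1 v → IsWalk src tgt a (m1 ++ m2) v →
      m1 ++ m2 = m1 := by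
    intro m1 m2 hm1 hm12
    obtain ⟨c, hc1, hc2⟩ := walk_append.1 hm12
    have : c = v := walk_end_unique hc1 hm1
    subst this
    rw [hacyc _ _ hc2, List.append_nil]
  rcases append_eq_prefix_comparable heq with hp | hp
  · obtain ⟨m, rfl⟩ := hp
    exact (haux h1 h1').symm
  · obtain ⟨m, rfl⟩ := hp
    exact haux h1' h1

end LGV

namespace LGV

variable {src tgt : E → Fin n}

structure PSys (src tgt : E → Fin n) (A B : Finset (Fin n)) (p : ℕ)
    (hA : A.card = p) (hB : B.card = p) where
  perm : Equiv.Perm (Fin p)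
  path : Fin p → List E
  walk : ∀ i, IsWalk src tgt (A.orderIsoOfFin hA i) (path i) (B.orderIsoOfFin hB (perm i))

variable {A B : Finset (Fin n)} {p : ℕ} {hA : A.card = p} {hB : B.card = p}

theorem PSys.ext' {s t : PSys src tgt A B p hA hB} (h1 : s.perm = t.perm)
    (h2 : s.path = t.path) : s = t := by
  cases s; cases t
  simp only at h1 h2
  subst h1; subst h2
  rfl

def vset (s : PSys src tgt A B p hA hB) (i : Fin p) : Finset (Fin n) :=
  pathVerts tgt (A.orderIsoOfFin hA i) (s.path i)

theorem mem_vset {s : PSys src tgt A B p hA hB} {u : Fin n} {i : Fin p} :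
    u ∈ vset s i ↔ u ∈ (A.orderIsoOfFin hA i : Fin n) :: (s.path i).map tgt :=
  List.mem_toFinset

theorem pathVerts_append (a : Fin n) (x y : List E) :
    pathVerts tgt a (x ++ y) = pathVerts tgt a x ∪ (y.map tgt).toFinset := by
  ext u
  simp [pathVerts, or_assoc]

def Bad (s : PSys src tgt A B p hA hB) : Prop :=
  ∃ i j, i ≠ j ∧ ¬ Disjoint (vset s i) (vset s j)

structure Cross (s : PSys src tgt A B p hA hB) where
  i : Fin p
  j : Fin p
  v : Fin n
  l1 : List E
  l2 : List E
  m1 : List E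
  m2 : List E
  hij : i ≠ j
  hsi : s.path i = l1 ++ l2
  hw1 : IsWalk src tgt (A.orderIsoOfFin hA i) l1 v
  hsj : s.path j = m1 ++ m2
  hw2 : IsWalk src tgt (A.orderIsoOfFin hA j) m1 v
  imin : ∀ i', (∃ j', i' ≠ j' ∧ ¬ Disjoint (vset s i') (vset s j')) → i ≤ i'
  vfirst : ∀ u ∈ (A.orderIsoOfFin hA i : Fin n) :: l1.map tgt,
      (∃ j', j' ≠ i ∧ u ∈ vset s j') → u = v
  jmin : ∀ j', j' ≠ i → v ∈ vset s j' → j ≤ j'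

theorem mem_vset_of_prefix {s : PSys src tgt A B p hA hB} {i : Fin p} {x y : List E}
    (hxy : s.path i = x ++ y) {u : Fin n}
    (hu : u ∈ (A.orderIsoOfFin hA i : Fin n) :: x.map tgt) : u ∈ vset s i := by
  rw [vset, hxy, pathVerts_append]
  exact Finset.mem_union_left _ (List.mem_toFinset.2 hu)

theorem Cross.vi {s : PSys src tgt A B p hA hB} (c : Cross s) : c.v ∈ vset s c.i :=
  mem_vset_of_prefix c.hsi (walk_end_mem c.hw1)

theorem Cross.vj {s : PSys src tgt A B p hA hB} (c : Cross s) : c.v ∈ vset s c.j :=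
  mem_vset_of_prefix c.hsj (walk_end_mem c.hw2)

theorem Cross.hilej {s : PSys src tgt A B p hA hB} (c : Cross s) : c.i ≤ c.j :=
  c.imin c.j ⟨c.i, c.hij.symm, Finset.not_disjoint_iff.2 ⟨c.v, c.vj, c.vi⟩⟩

theorem cross_exists (s : PSys src tgt A B p hA hB) (hs : Bad s) : Nonempty (Cross s) := by
  classical
  obtain ⟨i0, j0, hij0, hnd0⟩ := hs
  set T : Finset (Fin p) :=
    Finset.univ.filter (fun i => ∃ j, i ≠ j ∧ ¬ Disjoint (vset s i) (vset s j)) with hT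
  have hTne : T.Nonempty := by
    refine ⟨i0, ?_⟩
    simp only [hT, Finset.mem_filter, Finset.mem_univ, true_and]
    exact ⟨j0, hij0, hnd0⟩
  set i := T.min' hTne with hi
  have hiT : i ∈ T := T.min'_mem hTne
  have imin : ∀ i', (∃ j', i' ≠ j' ∧ ¬ Disjoint (vset s i') (vset s j')) → i ≤ i' := by
    intro i' h'
    exact T.min'_le i' (by simp only [hT, Finset.mem_filter, Finset.mem_univ, true_and]; exact h')
  obtain ⟨j1, hij1, hnd1⟩ : ∃ j, i ≠ j ∧ ¬ Disjoint (vset s i) (vset s j) := by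
    simpa only [hT, Finset.mem_filter, Finset.mem_univ, true_and] using hiT
  obtain ⟨u0, hu0i, hu0j⟩ := Finset.not_disjoint_iff.1 hnd1
  have hex : ∃ u ∈ (A.orderIsoOfFin hA i : Fin n) :: (s.path i).map tgt,
      (∃ j', j' ≠ i ∧ u ∈ vset s j') := ⟨u0, mem_vset.1 hu0i, j1, hij1.symm, hu0j⟩
  obtain ⟨v, l1, l2, hsplit, hw1, hw2, ⟨j2, hj2, hvj2⟩, hfirst⟩ :=
    walk_firstsplit _ (s.walk i) hex
  set Tj : Finset (Fin p) :=
    Finset.univ.filter (fun j' => j' ≠ i ∧ v ∈ vset s j') with hTj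
  have hTjne : Tj.Nonempty := by
    refine ⟨j2, ?_⟩
    simp only [hTj, Finset.mem_filter, Finset.mem_univ, true_and]
    exact ⟨hj2, hvj2⟩
  set j := Tj.min' hTjne
  have hjT : j ∈ Tj := Tj.min'_mem hTjne
  obtain ⟨hjne, hvj⟩ : j ≠ i ∧ v ∈ vset s j := by
    simpa only [hTj, Finset.mem_filter, Finset.mem_univ, true_and] using hjT
  obtain ⟨m1, m2, hsplitj, hwm1, _⟩ := walk_split (s.walk j) (mem_vset.1 hvj)
  exact ⟨⟨i, j, v, l1, l2, m1, m2, hjne.symm, hsplit, hw1, hsplitj, hwm1, imin,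
    hfirst, fun j' hj' hv' => Tj.min'_le j'
      (by simp only [hTj, Finset.mem_filter, Finset.mem_univ, true_and]; exact ⟨hj', hv'⟩)⟩⟩

end LGV

namespace LGV

variable {src tgt : E → Fin n} {A B : Finset (Fin n)} {p : ℕ} {hA : A.card = p} {hB : B.card = p}

theorem cross_unique (hacyc : ∀ (v : Fin n) (l : List E), IsWalk src tgt v l v → l = [])
    {s : PSys src tgt A B p hA hB} (c d : Cross s) :
    c.i = d.i ∧ c.v = d.v ∧ c.j = d.j ∧ c.l1 = d.l1 ∧ c.l2 = d.l2 ∧ c.m1 = d.m1 ∧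
      c.m2 = d.m2 := by
  have hi : c.i = d.i :=
    le_antisymm (c.imin d.i ⟨d.j, d.hij, Finset.not_disjoint_iff.2 ⟨d.v, d.vi, d.vj⟩⟩)
      (d.imin c.i ⟨c.j, c.hij, Finset.not_disjoint_iff.2 ⟨c.v, c.vi, c.vj⟩⟩)
  have hdsi := d.hsi
  have hdw1 := d.hw1
  have hdfirst := d.vfirst
  have hdjmin := d.jmin
  rw [← hi] at hdsi hdw1 hdfirst hdjmin
  have heq : c.l1 ++ c.l2 = d.l1 ++ d.l2 := c.hsi.symm.trans hdsi
  have hv : c.v = d.v := by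
    rcases append_eq_prefix_comparable heq with hp | hp
    · have hmem : c.v ∈ (A.orderIsoOfFin hA c.i : Fin n) :: d.l1.map tgt :=
        (List.cons_prefix_cons.2 ⟨rfl, hp.map tgt⟩).subset (walk_end_mem c.hw1)
      exact hdfirst c.v hmem ⟨c.j, c.hij.symm, c.vj⟩
    · have hmem : d.v ∈ (A.orderIsoOfFin hA c.i : Fin n) :: c.l1.map tgt :=
        (List.cons_prefix_cons.2 ⟨rfl, hp.map tgt⟩).subset (walk_end_mem hdw1)
      refine (c.vfirst d.v hmem ⟨d.j, ?_, d.vj⟩).symm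
      rw [hi]; exact d.hij.symm
  rw [← hv] at hdw1
  have hl1 : c.l1 = d.l1 := walk_split_unique hacyc c.hw1 hdw1 heq
  have hl2 : c.l2 = d.l2 := by
    rw [hl1] at heq
    exact List.append_cancel_left heq
  have hj : c.j = d.j := by
    refine le_antisymm (c.jmin d.j ?_ ?_) ?_
    · rw [hi]; exact d.hij.symm
    · rw [hv]; exact d.vj
    · refine hdjmin c.j c.hij.symm ?_
      rw [← hv]; exact c.vj
  have hdsj := d.hsj
  have hdw2 := d.hw2
  rw [← hj] at hdsj hdw2
  rw [← hv] at hdw2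
  have heqj : c.m1 ++ c.m2 = d.m1 ++ d.m2 := c.hsj.symm.trans hdsj
  have hm1 : c.m1 = d.m1 := walk_split_unique hacyc c.hw2 hdw2 heqj
  have hm2 : c.m2 = d.m2 := by
    rw [hm1] at heqj
    exact List.append_cancel_left heqj
  exact ⟨hi, hv, hj, hl1, hl2, hm1, hm2⟩

def Cross.apply {s : PSys src tgt A B p hA hB} (c : Cross s) : PSys src tgt A B p hA hB where
  perm := s.perm * Equiv.swap c.i c.j
  path := Function.update (Function.update s.path c.i (c.l1 ++ c.m2)) c.j (c.m1 ++ c.l2)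
  walk := by
    intro k
    rcases eq_or_ne k c.j with rfl | hkj
    · rw [Function.update_self]
      have hperm : (s.perm * Equiv.swap c.i c.j) c.j = s.perm c.i := by
        simp [Equiv.Perm.mul_apply]
      rw [hperm]
      refine walk_append.2 ⟨c.v, c.hw2, ?_⟩
      have hwi := s.walk c.i
      rw [c.hsi] at hwi
      obtain ⟨cm, hcm1, hcm2⟩ := walk_append.1 hwi
      rwa [walk_end_unique hcm1 c.hw1] at hcm2
    · rw [Function.update_of_ne hkj]
      rcases eq_or_ne k c.i with rfl | hki
      · rw [Function.update_self]
        have hperm : (s.perm * Equiv.swap c.i c.j) c.i = s.perm c.j := by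
          simp [Equiv.Perm.mul_apply]
        rw [hperm]
        refine walk_append.2 ⟨c.v, c.hw1, ?_⟩
        have hwj := s.walk c.j
        rw [c.hsj] at hwj
        obtain ⟨cm, hcm1, hcm2⟩ := walk_append.1 hwj
        rwa [walk_end_unique hcm1 c.hw2] at hcm2
      · rw [Function.update_of_ne hki]
        have hperm : (s.perm * Equiv.swap c.i c.j) k = s.perm k := by
          simp [Equiv.Perm.mul_apply, Equiv.swap_apply_of_ne_of_ne hki hkj]
        rw [hperm]
        exact s.walk k

theorem apply_path_i {s : PSys src tgt A B p hA hB} (c : Cross s) :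
    c.apply.path c.i = c.l1 ++ c.m2 := by
  show Function.update (Function.update s.path c.i (c.l1 ++ c.m2)) c.j (c.m1 ++ c.l2) c.i = _
  rw [Function.update_of_ne c.hij, Function.update_self]

theorem apply_path_j {s : PSys src tgt A B p hA hB} (c : Cross s) :
    c.apply.path c.j = c.m1 ++ c.l2 := by
  show Function.update (Function.update s.path c.i (c.l1 ++ c.m2)) c.j (c.m1 ++ c.l2) c.j = _
  rw [Function.update_self]

theorem apply_path_other {s : PSys src tgt A B p hA hB} (c : Cross s) {k : Fin p}
    (hki : k ≠ c.i) (hkj : k ≠ c.j) : c.apply.path k = s.path k := by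
  show Function.update (Function.update s.path c.i (c.l1 ++ c.m2)) c.j (c.m1 ++ c.l2) k = _
  rw [Function.update_of_ne hkj, Function.update_of_ne hki]

theorem vset_apply_other {s : PSys src tgt A B p hA hB} (c : Cross s) {k : Fin p}
    (hki : k ≠ c.i) (hkj : k ≠ c.j) : vset c.apply k = vset s k := by
  rw [vset, vset, apply_path_other c hki hkj]

theorem vset_prefix_subset {s : PSys src tgt A B p hA hB} {i : Fin p} {x y : List E}
    (hxy : s.path i = x ++ y) :
    pathVerts tgt (A.orderIsoOfFin hA i) x ⊆ vset s i := by
  rw [vset, hxy, pathVerts_append]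
  exact Finset.subset_union_left

theorem vset_suffix_subset {s : PSys src tgt A B p hA hB} {i : Fin p} {x y : List E}
    (hxy : s.path i = x ++ y) :
    (y.map tgt).toFinset ⊆ vset s i := by
  rw [vset, hxy, pathVerts_append]
  exact Finset.subset_union_right

theorem vset_apply_subset {s : PSys src tgt A B p hA hB} (c : Cross s) (k : Fin p) :
    vset c.apply k ⊆ vset s k ∪ (vset s c.i ∪ vset s c.j) := by
  rcases eq_or_ne k c.i with rfl | hki
  · rw [vset, apply_path_i c, pathVerts_append]
    intro u hu
    rcases Finset.mem_union.1 hu with hu | hu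
    · exact Finset.mem_union_right _ (Finset.mem_union_left _ (vset_prefix_subset c.hsi hu))
    · exact Finset.mem_union_right _ (Finset.mem_union_right _ (vset_suffix_subset c.hsj hu))
  · rcases eq_or_ne k c.j with rfl | hkj
    · rw [vset, apply_path_j c, pathVerts_append]
      intro u hu
      rcases Finset.mem_union.1 hu with hu | hu
      · exact Finset.mem_union_right _ (Finset.mem_union_right _ (vset_prefix_subset c.hsj hu))
      · exact Finset.mem_union_right _ (Finset.mem_union_left _ (vset_suffix_subset c.hsi hu))
    · rw [vset_apply_other c hki hkj]
      exact Finset.subset_union_left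

def Cross.flip (hacyc : ∀ (v : Fin n) (l : List E), IsWalk src tgt v l v → l = [])
    {s : PSys src tgt A B p hA hB} (c : Cross s) : Cross c.apply where
  i := c.i
  j := c.j
  v := c.v
  l1 := c.l1
  l2 := c.m2
  m1 := c.m1
  m2 := c.l2
  hij := c.hij
  hsi := apply_path_i c
  hw1 := c.hw1
  hsj := apply_path_j c
  hw2 := c.hw2
  imin := by
    intro i' hi'
    rcases eq_or_ne i' c.i with rfl | hi'i
    · exact le_refl _
    · rcases eq_or_ne i' c.j with rfl | hi'j
      · exact c.hilej
      · obtain ⟨j', hij', hnd⟩ := hi'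
        obtain ⟨u, hu1, hu2⟩ := Finset.not_disjoint_iff.1 hnd
        rw [vset_apply_other c hi'i hi'j] at hu1
        have hu2' := vset_apply_subset c j' hu2
        rcases Finset.mem_union.1 hu2' with hu | hu
        · exact c.imin i' ⟨j', hij', Finset.not_disjoint_iff.2 ⟨u, hu1, hu⟩⟩
        · rcases Finset.mem_union.1 hu with hu | hu
          · exact c.imin i' ⟨c.i, hi'i, Finset.not_disjoint_iff.2 ⟨u, hu1, hu⟩⟩
          · exact c.imin i' ⟨c.j, hi'j, Finset.not_disjoint_iff.2 ⟨u, hu1, hu⟩⟩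
  vfirst := by
    intro u hu hex
    obtain ⟨j', hj'i, hmem⟩ := hex
    rcases eq_or_ne j' c.j with rfl | hj'j
    · rw [vset, apply_path_j c, pathVerts_append] at hmem
      rcases Finset.mem_union.1 hmem with hm | hm
      · exact c.vfirst u hu ⟨c.j, c.hij.symm, vset_prefix_subset c.hsj hm⟩
      · exfalso
        have hnd := walk_nodup hacyc (s.walk c.i)
        rw [c.hsi] at hnd
        have hdisj : ((A.orderIsoOfFin hA c.i : Fin n) :: c.l1.map tgt).Disjoint
            (c.l2.map tgt) := by
          have : ((A.orderIsoOfFin hA c.i : Fin n) :: (c.l1 ++ c.l2).map tgt) =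
              ((A.orderIsoOfFin hA c.i : Fin n) :: c.l1.map tgt) ++ c.l2.map tgt := by
            simp
          rw [this] at hnd
          exact List.disjoint_of_nodup_append hnd
        exact hdisj hu (List.mem_toFinset.1 hm)
    · rw [vset_apply_other c hj'i hj'j] at hmem
      exact c.vfirst u hu ⟨j', hj'i, hmem⟩
  jmin := by
    intro j' hj'i hv'
    rcases eq_or_ne j' c.j with rfl | hj'j
    · exact le_refl _
    · rw [vset_apply_other c hj'i hj'j] at hv'
      exact c.jmin j' hj'i hv'

theorem apply_flip (hacyc : ∀ (v : Fin n) (l : List E), IsWalk src tgt v l v → l = [])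
    {s : PSys src tgt A B p hA hB} (c : Cross s) : (c.flip hacyc).apply = s := by
  refine PSys.ext' ?_ ?_
  · show c.apply.perm * Equiv.swap c.i c.j = s.perm
    show s.perm * Equiv.swap c.i c.j * Equiv.swap c.i c.j = s.perm
    rw [mul_assoc, Equiv.swap_mul_self, mul_one]
  · funext k
    show Function.update (Function.update c.apply.path c.i (c.l1 ++ c.l2)) c.j
        (c.m1 ++ c.m2) k = s.path k
    rcases eq_or_ne k c.j with rfl | hkj
    · rw [Function.update_self, c.hsj]
    · rw [Function.update_of_ne hkj]
      rcases eq_or_ne k c.i with rfl | hki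
      · rw [Function.update_self, c.hsi]
      · rw [Function.update_of_ne hki]
        exact apply_path_other c hki hkj

theorem apply_bad {s : PSys src tgt A B p hA hB} (c : Cross s) : Bad c.apply := by
  refine ⟨c.i, c.j, c.hij, Finset.not_disjoint_iff.2 ⟨c.v, ?_, ?_⟩⟩
  · exact mem_vset_of_prefix (apply_path_i c) (walk_end_mem c.hw1)
  · exact mem_vset_of_prefix (apply_path_j c) (walk_end_mem c.hw2)

end LGV

namespace LGV

variable {src tgt : E → Fin n} {A B : Finset (Fin n)} {p : ℕ} {hA : A.card = p} {hB : B.card = p}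

theorem wt_append (x y : List E) : wt (x ++ y) = wt x * wt y := by
  simp [wt]

theorem psys_finite (hacyc : ∀ (v : Fin n) (l : List E), IsWalk src tgt v l v → l = []) :
    Finite (PSys src tgt A B p hA hB) := by
  haveI : Finite {l : List E // l.length ≤ n} :=
    Set.Finite.to_subtype (List.finite_length_le E n)
  refine Finite.of_injective (fun s : PSys src tgt A B p hA hB =>
    ((s.perm, fun i => ⟨s.path i, walk_length_le hacyc (s.walk i)⟩) :
      Equiv.Perm (Fin p) × (Fin p → {l : List E // l.length ≤ n}))) ?_
  intro s t h
  have h1 : s.perm = t.perm := congrArg Prod.fst h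
  have h2 : s.path = t.path := by
    funext i
    exact congrArg Subtype.val (congrFun (congrArg Prod.snd h) i)
  exact PSys.ext' h1 h2

theorem apply_prod_wt {s : PSys src tgt A B p hA hB} (c : Cross s) :
    ∏ i, wt (c.apply.path i) = ∏ i, wt (s.path i) := by
  classical
  have hfun : (fun k => wt (c.apply.path k)) =
      Function.update (Function.update (fun k => wt (s.path k)) c.i (wt (c.l1 ++ c.m2))) c.j
        (wt (c.m1 ++ c.l2)) := by
    funext k
    rcases eq_or_ne k c.j with rfl | hkj
    · rw [Function.update_self, apply_path_j]
    · rw [Function.update_of_ne hkj]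
      rcases eq_or_ne k c.i with rfl | hki
      · rw [Function.update_self, apply_path_i]
      · rw [Function.update_of_ne hki, apply_path_other c hki hkj]
  rw [hfun, Finset.prod_update_of_mem (Finset.mem_univ c.j), Finset.sdiff_singleton_eq_erase,
    Finset.prod_update_of_mem (Finset.mem_erase.2 ⟨c.hij, Finset.mem_univ c.i⟩),
    Finset.sdiff_singleton_eq_erase,
    ← Finset.mul_prod_erase Finset.univ (fun k => wt (s.path k)) (Finset.mem_univ c.j),
    ← Finset.mul_prod_erase (Finset.univ.erase c.j) (fun k => wt (s.path k))
      (Finset.mem_erase.2 ⟨c.hij, Finset.mem_univ c.i⟩),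
    c.hsi, c.hsj, wt_append, wt_append, wt_append, wt_append]
  ring

theorem apply_sign {s : PSys src tgt A B p hA hB} (c : Cross s) :
    ((Equiv.Perm.sign c.apply.perm : ℤ) : MvPolynomial E ℚ) =
      -((Equiv.Perm.sign s.perm : ℤ) : MvPolynomial E ℚ) := by
  have : c.apply.perm = s.perm * Equiv.swap c.i c.j := rfl
  rw [this, Equiv.Perm.sign_mul, Equiv.Perm.sign_swap c.hij]
  push_cast
  ring

theorem apply_ne {s : PSys src tgt A B p hA hB} (c : Cross s) : c.apply ≠ s := by
  intro h
  have hperm : s.perm * Equiv.swap c.i c.j = s.perm := congrArg PSys.perm h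
  have hswap : Equiv.swap c.i c.j = 1 :=
    mul_left_cancel (a := s.perm) (by rw [mul_one]; exact hperm)
  have : Equiv.swap c.i c.j c.i = c.i := by rw [hswap]; rfl
  rw [Equiv.swap_apply_left] at this
  exact c.hij this.symm

theorem apply_eq_apply (hacyc : ∀ (v : Fin n) (l : List E), IsWalk src tgt v l v → l = [])
    {s : PSys src tgt A B p hA hB} (c d : Cross s) : c.apply = d.apply := by
  obtain ⟨hi, hv, hj, hl1, hl2, hm1, hm2⟩ := cross_unique hacyc c d
  refine PSys.ext' ?_ ?_
  · show s.perm * Equiv.swap c.i c.j = s.perm * Equiv.swap d.i d.j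
    rw [hi, hj]
  · show Function.update (Function.update s.path c.i (c.l1 ++ c.m2)) c.j (c.m1 ++ c.l2) =
      Function.update (Function.update s.path d.i (d.l1 ++ d.m2)) d.j (d.m1 ++ d.l2)
    rw [hi, hj, hl1, hl2, hm1, hm2]

end LGV
theorem stmt8 {n : ℕ} {E : Type} [Fintype E] [DecidableEq E] (src tgt : E → Fin n)
    (hacyc : ∀ (v : Fin n) (l : List E), IsWalk src tgt v l v → l = [])
    (𝒜 ℬ : Finset (Fin n)) (p : ℕ) (hA : 𝒜.card = p) (hB : ℬ.card = p) :
    ((pathMat src tgt).submatrix (fun i => (𝒜.orderIsoOfFin hA i : Fin n))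
        (fun j => (ℬ.orderIsoOfFin hB j : Fin n))).det =
      ∑ᶠ F : SAPath src tgt 𝒜 ℬ p hA hB,
        ((Equiv.Perm.sign F.perm : ℤ) : MvPolynomial E ℚ) * ∏ i, wt (F.path i) := by
  classical
  letI instW : ∀ a b : Fin n, Fintype {l : List E // IsWalk src tgt a l b} :=
    fun a b => (LGV.walk_finite hacyc a b).fintype
  letI instP : Fintype (LGV.PSys src tgt 𝒜 ℬ p hA hB) :=
    @Fintype.ofFinite _ (LGV.psys_finite hacyc)
  set f : LGV.PSys src tgt 𝒜 ℬ p hA hB → MvPolynomial E ℚ :=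
    fun s => ((Equiv.Perm.sign s.perm : ℤ) : MvPolynomial E ℚ) * ∏ i, wt (s.path i) with hf
  -- the SAPath side
  let eS : {s : LGV.PSys src tgt 𝒜 ℬ p hA hB // ¬ LGV.Bad s} ≃ SAPath src tgt 𝒜 ℬ p hA hB :=
    { toFun := fun s => ⟨s.1.perm, s.1.path, s.1.walk,
        fun i => LGV.walk_nodup hacyc (s.1.walk i),
        fun i j hij => by
          by_contra hnd
          exact s.2 ⟨i, j, hij, hnd⟩⟩
      invFun := fun F => ⟨⟨F.perm, F.path, F.walk⟩,
        fun ⟨i, j, hij, hnd⟩ => hnd (F.pathdisj i j hij)⟩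
      left_inv := fun s => rfl
      right_inv := fun F => rfl }
  letI instS : Fintype (SAPath src tgt 𝒜 ℬ p hA hB) := Fintype.ofEquiv _ eS
  -- determinant expansion
  rw [← Matrix.det_transpose, Matrix.det_apply']
  have hmat : ∀ a b : Fin n,
      pathMat src tgt a b = ∑ P : {l : List E // IsWalk src tgt a l b}, wt P.1 :=
    fun a b => finsum_eq_sum_of_fintype _
  have hdet : ∑ σ : Equiv.Perm (Fin p),
      ((Equiv.Perm.sign σ : ℤ) : MvPolynomial E ℚ) *
        ∏ i, ((pathMat src tgt).submatrix (fun i => (𝒜.orderIsoOfFin hA i : Fin n))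
          (fun j => (ℬ.orderIsoOfFin hB j : Fin n)))ᵀ (σ i) i =
      ∑ s : LGV.PSys src tgt 𝒜 ℬ p hA hB, f s := by
    have step1 : ∀ σ : Equiv.Perm (Fin p),
        (∏ i, ((pathMat src tgt).submatrix (fun i => (𝒜.orderIsoOfFin hA i : Fin n))
          (fun j => (ℬ.orderIsoOfFin hB j : Fin n)))ᵀ (σ i) i) =
        ∑ x : (∀ i : Fin p, {l : List E //
            IsWalk src tgt (𝒜.orderIsoOfFin hA i) l (ℬ.orderIsoOfFin hB (σ i))}),
          ∏ i, wt (x i).1 := by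
      intro σ
      have : ∀ i : Fin p, ((pathMat src tgt).submatrix (fun i => (𝒜.orderIsoOfFin hA i : Fin n))
          (fun j => (ℬ.orderIsoOfFin hB j : Fin n)))ᵀ (σ i) i =
          ∑ P : {l : List E // IsWalk src tgt (𝒜.orderIsoOfFin hA i) l
            (ℬ.orderIsoOfFin hB (σ i))}, wt P.1 := by
        intro i
        rw [Matrix.transpose_apply, Matrix.submatrix_apply]
        exact hmat _ _
      rw [Finset.prod_congr rfl (fun i _ => this i)]
      rw [Finset.prod_univ_sum]
      rw [← Fintype.piFinset_univ]
    calc ∑ σ : Equiv.Perm (Fin p), ((Equiv.Perm.sign σ : ℤ) : MvPolynomial E ℚ) *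
        ∏ i, ((pathMat src tgt).submatrix (fun i => (𝒜.orderIsoOfFin hA i : Fin n))
          (fun j => (ℬ.orderIsoOfFin hB j : Fin n)))ᵀ (σ i) i
        = ∑ σ : Equiv.Perm (Fin p), ∑ x : (∀ i : Fin p, {l : List E //
            IsWalk src tgt (𝒜.orderIsoOfFin hA i) l (ℬ.orderIsoOfFin hB (σ i))}),
            ((Equiv.Perm.sign σ : ℤ) : MvPolynomial E ℚ) * ∏ i, wt (x i).1 := by
          refine Finset.sum_congr rfl fun σ _ => ?_
          rw [step1 σ, Finset.mul_sum]
      _ = ∑ q : (Σ σ : Equiv.Perm (Fin p), ∀ i : Fin p, {l : List E //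
            IsWalk src tgt (𝒜.orderIsoOfFin hA i) l (ℬ.orderIsoOfFin hB (σ i))}),
            ((Equiv.Perm.sign q.1 : ℤ) : MvPolynomial E ℚ) * ∏ i, wt (q.2 i).1 := by
          rw [← Finset.univ_sigma_univ, Finset.sum_sigma]
      _ = ∑ s : LGV.PSys src tgt 𝒜 ℬ p hA hB, f s := by
          refine Fintype.sum_equiv
            { toFun := fun q => ⟨q.1, fun i => (q.2 i).1, fun i => (q.2 i).2⟩
              invFun := fun s => ⟨s.perm, fun i => ⟨s.path i, s.walk i⟩⟩
              left_inv := fun q => rfl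
              right_inv := fun s => rfl } _ _ (fun q => by simp only [hf]; rfl)
  rw [hdet]
  -- split into good and bad systems
  rw [← Finset.sum_filter_add_sum_filter_not Finset.univ (fun s => LGV.Bad s) f]
  have hcancel : ∀ (s : LGV.PSys src tgt 𝒜 ℬ p hA hB) (c : LGV.Cross s),
      f s + f c.apply = 0 := by
    intro s c
    simp only [hf]
    rw [LGV.apply_sign c, LGV.apply_prod_wt c]
    ring
  have hbad : ∑ s ∈ Finset.univ.filter (fun s => LGV.Bad s), f s = 0 := by
    refine Finset.sum_involution
      (fun s hs => ((LGV.cross_exists s (by simpa using hs)).some).apply)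
      (fun s hs => ?_) (fun s hs _ => ?_) (fun s hs => ?_) (fun s hs => ?_)
    · exact hcancel s _
    · exact LGV.apply_ne _
    · simpa using LGV.apply_bad _
    · set c := (LGV.cross_exists s (by simpa using hs)).some with hc
      exact (LGV.apply_eq_apply hacyc _ (c.flip hacyc)).trans (LGV.apply_flip hacyc c)
  rw [hbad, zero_add]
  -- identify good systems with SAPaths
  rw [finsum_eq_sum_of_fintype]
  have hsub : ∑ x ∈ Finset.univ.filter (fun s => ¬ LGV.Bad s), f x =
      ∑ s : {s : LGV.PSys src tgt 𝒜 ℬ p hA hB // ¬ LGV.Bad s}, f s.1 :=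
    Finset.sum_subtype _ (by simp) f
  rw [hsub, ← Equiv.sum_comp eS (fun F : SAPath src tgt 𝒜 ℬ p hA hB =>
    ((Equiv.Perm.sign F.perm : ℤ) : MvPolynomial E ℚ) * ∏ i, wt (F.path i))]
  exact Finset.sum_congr rfl (fun s _ => rfl)
end
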